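/- Let A′, A″ be dg algebras with level-3 twisting cochains E′, E″ and set A = A′⊗A″; let E : BA⊗BA → A be the twisting cochain E(a,b) = ε_{B(A,A,A)}(G_a(b)) (with E(1,−) = α) of the construction. If E′ and E″ are normalized, then E is normalized: E([1],1) = E(1,[1]) = 1; E(a,b) = 0 whenever the total bar length k+l > 1 and some entry a_i or b_j equals 1 ∈ A; and E(a,b) lies in the augmentation ideal Ā whenever k+l > 1. -/

import Mathlib

open scoped TensorProduct

noncomputable section

/-- The sign `(-1)^n` as an integer, for `n : ℤ`. -/
def pm (n : ℤ) : ℤ := (((-1 : ℤˣ) ^ n : ℤˣ) : ℤ)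

/-- The total desuspended degree `Σᵢ (nᵢ - 1)` of a list of (cohomological) degrees;
this is the degree of the bar word `[a₁|⋯|a_k]` when `aᵢ` has degree `nᵢ`. -/
def bdeg (ds : List ℤ) : ℤ := (ds.map (fun n => n - 1)).sum

/-- An augmented, unital, associative differential graded algebra over a commutative
unital ring `R`, with cohomological grading (the differential has degree `+1`).
The grading is internal (`grading_internal`), multiplication and unit are graded,
the differential satisfies the graded Leibniz rule, and the augmentation is a
map of augmented dg algebras.  The operator `sgn` is the canonical "sign" operator
multiplying the component of degree `i` by `(-1)^i`; it is uniquely determined by the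
grading and is included as data for convenience (Koszul signs). -/
structure DGAlgebra (R : Type) [CommRing R] : Type 1 where
  carrier : Type
  [ring : Ring carrier]
  [alg : Algebra R carrier]
  grading : ℤ → Submodule R carrier
  grading_internal : DirectSum.IsInternal grading
  one_mem : (1 : carrier) ∈ grading 0
  mul_mem : ∀ {i j : ℤ} {a b : carrier},
    a ∈ grading i → b ∈ grading j → (a * b) ∈ grading (i + j)
  d : carrier →ₗ[R] carrier
  d_mem : ∀ {i : ℤ} {a : carrier}, a ∈ grading i → d a ∈ grading (i + 1)
  d_sq : ∀ a, d (d a) = 0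
  leibniz : ∀ {i : ℤ} {a b : carrier}, a ∈ grading i →
    d (a * b) = d a * b + pm i • (a * d b)
  aug : carrier →ₐ[R] R
  aug_d : ∀ a, aug (d a) = 0
  aug_graded : ∀ {i : ℤ} {a : carrier}, a ∈ grading i → i ≠ 0 → aug a = 0
  sgn : carrier →ₗ[R] carrier
  sgn_apply : ∀ {i : ℤ} {a : carrier}, a ∈ grading i → sgn a = pm i • a

attribute [instance] DGAlgebra.ring DGAlgebra.alg

namespace DGAlgebra

variable {R : Type} [CommRing R] (A : DGAlgebra R)

/-- The unnormalized bar construction `BA = T(s⁻¹A)` of `A`, *as a graded `R`-module*.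
At the level of (ungraded) `R`-modules it is the tensor algebra on the underlying
module of `A`; the word `[a₁|⋯|a_k]` is the product `ι a₁ ⋯ ι a_k`.  The
(de)suspension is invisible at the module level; it is accounted for by the degree
conventions (`bdeg`) and the sign operators. -/
abbrev Bar : Type := TensorAlgebra R A.carrier

/-- The bar word `[a₁|⋯|a_k] ∈ BA`. The empty word is the counit element `𝟙`. -/
def word (l : List A.carrier) : A.Bar := (l.map (TensorAlgebra.ι R)).prod

/-- `A.Homog l ds` says that the list `l` consists of homogeneous elements,
`l i` having degree `ds i`. -/
def Homog (l : List A.carrier) (ds : List ℤ) : Prop :=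
  l.length = ds.length ∧ ∀ i : ℕ, l.getD i 0 ∈ A.grading (ds.getD i 0)

/-- The concatenation operator `∇ : BA ⊗ BA → BA`. -/
def concat : A.Bar ⊗[R] A.Bar →ₗ[R] A.Bar := LinearMap.mul' R A.Bar

/-- The augmentation ideal `Ā ⊆ A`. -/
def augIdeal : Submodule R A.carrier := LinearMap.ker A.aug.toLinearMap

/-- The normalized bar construction `B̄A = T(s⁻¹Ā)`. -/
abbrev NBar : Type := TensorAlgebra R A.augIdeal

/-- words in the normalized bar construction. -/
def nword (l : List A.augIdeal) : A.NBar := (l.map (TensorAlgebra.ι R)).prod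

/-- The canonical inclusion `B̄A → BA`. -/
def nincl : A.NBar →ₗ[R] A.Bar :=
  (TensorAlgebra.lift R ((TensorAlgebra.ι R) ∘ₗ A.augIdeal.subtype)).toLinearMap

/-- The (internal, total-degree) grading of the bar construction:
`(BA)_n` is spanned by the homogeneous words of total desuspended degree `n`. -/
def barGrading (n : ℤ) : Submodule R A.Bar :=
  Submodule.span R {x | ∃ l ds, A.Homog l ds ∧ bdeg ds = n ∧ x = A.word l}

end DGAlgebra

/-- All the canonical structure carried by the bar construction `BA` of an augmented
dg algebra `A`: the deconcatenation coproduct `Δ`, the bar differential `dB`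
(tensor-product differential plus the `∂` multiplying adjacent entries through the
desuspended multiplication), the sign operator `sgnB`, the graded twist `tw`, the
canonical twisting cochain `α` (projection to `B₁A = s⁻¹A` followed by `σ`), and the
counit `εB`.  Each operator is uniquely determined by its prescribed values on the
words `[a₁|⋯|a_k]`, which span `BA`. -/
structure BarData {R : Type} [CommRing R] (A : DGAlgebra R) : Type where
  /-- deconcatenation coproduct -/
  Δ : A.Bar →ₗ[R] A.Bar ⊗[R] A.Bar
  Δ_word : ∀ l : List A.carrier,
    Δ (A.word l) = ∑ i ∈ Finset.range (l.length + 1),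
      A.word (l.take i) ⊗ₜ[R] A.word (l.drop i)
  /-- the bar differential -/
  dB : A.Bar →ₗ[R] A.Bar
  dB_word : ∀ (l : List A.carrier) (ds : List ℤ), A.Homog l ds →
    dB (A.word l) =
      - (∑ i ∈ Finset.range l.length,
          pm (bdeg (ds.take i)) • A.word (l.set i (A.d (l.getD i 0))))
      + ∑ i ∈ Finset.range (l.length - 1),
          pm (bdeg (ds.take (i + 1))) •
            A.word (l.take i ++ (l.getD i 0 * l.getD (i + 1) 0) :: l.drop (i + 2))
  /-- the sign operator of `BA` -/
  sgnB : A.Bar →ₗ[R] A.Bar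
  sgnB_word : ∀ (l : List A.carrier) (ds : List ℤ), A.Homog l ds →
    sgnB (A.word l) = pm (bdeg ds) • A.word l
  /-- the graded (Koszul) twist `BA ⊗ BA → BA ⊗ BA` -/
  tw : A.Bar ⊗[R] A.Bar →ₗ[R] A.Bar ⊗[R] A.Bar
  tw_word : ∀ (l m : List A.carrier) (ds es : List ℤ), A.Homog l ds → A.Homog m es →
    tw (A.word l ⊗ₜ[R] A.word m) = pm (bdeg ds * bdeg es) • (A.word m ⊗ₜ[R] A.word l)
  /-- the canonical twisting cochain `α : BA → A` -/
  α : A.Bar →ₗ[R] A.carrier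
  α_single : ∀ a : A.carrier, α (A.word [a]) = a
  α_word : ∀ l : List A.carrier, l.length ≠ 1 → α (A.word l) = 0
  /-- the counit of `BA` -/
  εB : A.Bar →ₗ[R] R
  εB_one : εB (1 : A.Bar) = 1
  εB_word : ∀ l : List A.carrier, l ≠ [] → εB (A.word l) = 0

namespace BarData

variable {R : Type} [CommRing R] {A : DGAlgebra R} (BD : BarData A)

/-- `sgnB` raised to the power `n` (only the parity of `n` matters);
used to express Koszul signs `(-1)^{n·|x|}`. -/
def sgnPow (n : ℤ) : A.Bar →ₗ[R] A.Bar :=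
  if n % 2 = 0 then LinearMap.id else BD.sgnB

/-- The differential of `BA ⊗ BA` (with the Koszul sign rule). -/
def dBB : A.Bar ⊗[R] A.Bar →ₗ[R] A.Bar ⊗[R] A.Bar :=
  TensorProduct.map BD.dB LinearMap.id + TensorProduct.map BD.sgnB BD.dB

/-- The middle interchange `1 ⊗ tw ⊗ 1` on `(BA ⊗ BA) ⊗ (BA ⊗ BA)`
(the graded twist of the two middle factors). -/
def midTw : (A.Bar ⊗[R] A.Bar) ⊗[R] (A.Bar ⊗[R] A.Bar) →ₗ[R]
    (A.Bar ⊗[R] A.Bar) ⊗[R] (A.Bar ⊗[R] A.Bar) :=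
  let e₁ := TensorProduct.assoc R A.Bar A.Bar (A.Bar ⊗[R] A.Bar)
  let e₂ := TensorProduct.congr (LinearEquiv.refl R A.Bar)
    (TensorProduct.assoc R A.Bar A.Bar A.Bar).symm
  e₁.symm.toLinearMap ∘ₗ e₂.symm.toLinearMap ∘ₗ
    (TensorProduct.map LinearMap.id (TensorProduct.map BD.tw LinearMap.id)) ∘ₗ
    e₂.toLinearMap ∘ₗ e₁.toLinearMap

/-- The coproduct of `BA ⊗ BA` (with Koszul signs). -/
def ΔBB : A.Bar ⊗[R] A.Bar →ₗ[R] (A.Bar ⊗[R] A.Bar) ⊗[R] (A.Bar ⊗[R] A.Bar) :=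
  BD.midTw ∘ₗ TensorProduct.map BD.Δ BD.Δ

/-- The counit of `BA ⊗ BA`. -/
def εBB : A.Bar ⊗[R] A.Bar →ₗ[R] R :=
  (TensorProduct.lid R R).toLinearMap ∘ₗ TensorProduct.map BD.εB BD.εB

/-- The twisting cochain `β = ε_{BA} ⊗ α : BA ⊗ BA → A`. -/
def β : A.Bar ⊗[R] A.Bar →ₗ[R] A.carrier :=
  (TensorProduct.lid R A.carrier).toLinearMap ∘ₗ TensorProduct.map BD.εB BD.α

end BarData

/-- `E : BA ⊗ BA → A` is a twisting cochain: it has degree `+1`, satisfies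
`E(𝟙,-) = E(-,𝟙) = α` and the twisting cochain equation `d(E) = E ∪ E`,
written as `d∘E + E∘d_{BA⊗BA} = μ_A (E ⊗ E) Δ_{BA⊗BA}` (all Koszul signs being
expressed via the sign operators). -/
structure IsTwistingCochain {R : Type} [CommRing R] {A : DGAlgebra R} (BD : BarData A)
    (E : A.Bar ⊗[R] A.Bar →ₗ[R] A.carrier) : Prop where
  degree : ∀ (l m : List A.carrier) (ds es : List ℤ), A.Homog l ds → A.Homog m es →
    E (A.word l ⊗ₜ[R] A.word m) ∈ A.grading (bdeg ds + bdeg es + 1)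
  unit_left : ∀ b : A.Bar, E ((1 : A.Bar) ⊗ₜ[R] b) = BD.α b
  unit_right : ∀ a : A.Bar, E (a ⊗ₜ[R] (1 : A.Bar)) = BD.α a
  twist : A.d ∘ₗ E + E ∘ₗ BD.dBB =
    LinearMap.mul' R A.carrier ∘ₗ
      TensorProduct.map (E ∘ₗ TensorProduct.map BD.sgnB BD.sgnB) E ∘ₗ BD.ΔBB

/-- A twisting cochain is *normalized* if `E([1],𝟙) = E(𝟙,[1]) = 1`, if `E(a,b) = 0`
whenever the total bar length is `> 1` and some entry equals `1 ∈ A`, and if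
`E(a,b)` lies in the augmentation ideal whenever the total bar length is `> 1`. -/
structure IsNormalized {R : Type} [CommRing R] {A : DGAlgebra R}
    (E : A.Bar ⊗[R] A.Bar →ₗ[R] A.carrier) : Prop where
  one_right : E (A.word [(1 : A.carrier)] ⊗ₜ[R] (1 : A.Bar)) = 1
  one_left : E ((1 : A.Bar) ⊗ₜ[R] A.word [(1 : A.carrier)]) = 1
  vanish : ∀ l m : List A.carrier, 1 < l.length + m.length →
    ((1 : A.carrier) ∈ l ∨ (1 : A.carrier) ∈ m) → E (A.word l ⊗ₜ[R] A.word m) = 0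
  aug_ideal : ∀ l m : List A.carrier, 1 < l.length + m.length →
    A.aug (E (A.word l ⊗ₜ[R] A.word m)) = 0

/-- A twisting cochain has *level 3* if `E(a,b) = 0` whenever `a` has bar length `> 1`. -/
def IsLevel3 {R : Type} [CommRing R] {A : DGAlgebra R}
    (E : A.Bar ⊗[R] A.Bar →ₗ[R] A.carrier) : Prop :=
  ∀ (l m : List A.carrier), 1 < l.length → E (A.word l ⊗ₜ[R] A.word m) = 0

/-- A multiplication on the unnormalized bar construction `BA`: a morphism of
dg coalgebras `BA ⊗ BA → BA` of degree `0` having the counit element `𝟙` as a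
two-sided unit (associativity is *not* required). -/
structure BarMult {R : Type} [CommRing R] {A : DGAlgebra R} (BD : BarData A) : Type where
  f : A.Bar ⊗[R] A.Bar →ₗ[R] A.Bar
  one_mul : ∀ b : A.Bar, f ((1 : A.Bar) ⊗ₜ[R] b) = b
  mul_one : ∀ a : A.Bar, f (a ⊗ₜ[R] (1 : A.Bar)) = a
  graded : ∀ (l m : List A.carrier) (ds es : List ℤ), A.Homog l ds → A.Homog m es →
    f (A.word l ⊗ₜ[R] A.word m) ∈ A.barGrading (bdeg ds + bdeg es)
  chain : BD.dB ∘ₗ f = f ∘ₗ BD.dBB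
  counit : BD.εB ∘ₗ f = BD.εBB
  coalg : BD.Δ ∘ₗ f = TensorProduct.map f f ∘ₗ BD.ΔBB


/-- The tensor product dg algebra `A = A' ⊗ A''` of two augmented dg algebras, with the
graded (Koszul) multiplication `(a'⊗a'')(b'⊗b'') = (-1)^{|a''||b'|} a'b' ⊗ a''b''`,
tensor-product differential, grading and augmentation.  It is presented as a dg algebra
`A` together with a linear isomorphism `e : A ≅ A' ⊗ A''` identifying all structure. -/
structure TensorDGA {R : Type} [CommRing R] (A' A'' : DGAlgebra R) : Type 1 where
  A : DGAlgebra R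
  e : A.carrier ≃ₗ[R] A'.carrier ⊗[R] A''.carrier
  mul_compat : ∀ {i'' j' : ℤ} (a' : A'.carrier) {a'' : A''.carrier} {b' : A'.carrier}
    (b'' : A''.carrier), a'' ∈ A''.grading i'' → b' ∈ A'.grading j' →
    e.symm (a' ⊗ₜ[R] a'') * e.symm (b' ⊗ₜ[R] b'') =
      pm (i'' * j') • e.symm ((a' * b') ⊗ₜ[R] (a'' * b''))
  one_def : e.symm ((1 : A'.carrier) ⊗ₜ[R] (1 : A''.carrier)) = 1
  grading_compat : ∀ {i' i'' : ℤ} {a' : A'.carrier} {a'' : A''.carrier},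
    a' ∈ A'.grading i' → a'' ∈ A''.grading i'' → e.symm (a' ⊗ₜ[R] a'') ∈ A.grading (i' + i'')
  d_compat : ∀ {i' : ℤ} (a'' : A''.carrier) {a' : A'.carrier}, a' ∈ A'.grading i' →
    A.d (e.symm (a' ⊗ₜ[R] a'')) =
      e.symm ((A'.d a') ⊗ₜ[R] a'') + pm i' • e.symm (a' ⊗ₜ[R] (A''.d a''))
  aug_compat : ∀ (a' : A'.carrier) (a'' : A''.carrier),
    A.aug (e.symm (a' ⊗ₜ[R] a'')) = A'.aug a' * A''.aug a''

namespace TensorDGA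

variable {R : Type} [CommRing R] {A' A'' : DGAlgebra R} (T : TensorDGA A' A'')

/-- The list `[a'₁⊗a''₁ | ⋯ | a'_k⊗a''_k]` of entries of `A = A' ⊗ A''`. -/
def mixList (l' : List A'.carrier) (l'' : List A''.carrier) : List T.A.carrier :=
  List.zipWith (fun x y => T.e.symm (x ⊗ₜ[R] y)) l' l''

end TensorDGA

/-- The Koszul sign exponent `Σ_{i>j} (|b'_i| - 1)·|b''_j|` appearing in the definition
of the map `Ẽ' ⊗ μ_{A''} : B(A'⊗A'') → A'⊗A''`. -/
def koszulExpL (ds' ds'' : List ℤ) (k : ℕ) : ℤ :=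
  ∑ p ∈ (Finset.range k ×ˢ Finset.range k).filter (fun p => p.2 < p.1),
    (ds'.getD p.1 0 - 1) * ds''.getD p.2 0

/-- The Koszul sign exponent `Σ_{i>j} |b'_i|·(|b''_j| - 1)` appearing in the definition
of the map `μ_{A'} ⊗ Ẽ'' : B(A'⊗A'') → A'⊗A''`. -/
def koszulExpR (ds' ds'' : List ℤ) (k : ℕ) : ℤ :=
  ∑ p ∈ (Finset.range k ×ˢ Finset.range k).filter (fun p => p.2 < p.1),
    ds'.getD p.1 0 * (ds''.getD p.2 0 - 1)

section Construction

variable {R : Type} [CommRing R] {A' A'' : DGAlgebra R} (T : TensorDGA A' A'')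
  (BD : BarData T.A)

/-- The operator `G_{[a₁]} = ((E'_{[a'₁]} ⊗ μ_{A''}) ⊗ 1 ⊗ (μ_{A'} ⊗ E''_{[a''₁]})) Δ⁽³⁾`,
where `F₁ = E'_{[a'₁]} ⊗ μ_{A''}` and `F₃ = μ_{A'} ⊗ E''_{[a''₁]}` (the Koszul sign of
the degree-`|a''₁|` map `F₃` passing the first two tensor factors being expressed by
`sgnPow n''`). -/
def Gone (F₁ F₃ : T.A.Bar →ₗ[R] T.A.carrier) (n'' : ℤ) :
    T.A.Bar →ₗ[R] T.A.carrier ⊗[R] (T.A.Bar ⊗[R] T.A.carrier) :=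
  TensorProduct.map (F₁ ∘ₗ BD.sgnPow n'') (TensorProduct.map (BD.sgnPow n'') F₃) ∘ₗ
    TensorProduct.map LinearMap.id BD.Δ ∘ₗ BD.Δ

/-- The operator
`M(Ẽ', Ẽ'', G̃) = (1⊗1⊗μ_A)((Ẽ'⊗μ_{A''})⊗1⊗(μ_{A'}⊗Ẽ'')⊗1)(1⊗Δ∇⁽³⁾⊗1)(1⊗1⊗(σ⁻¹⊗1⊗1)G̃)Δ⁽³⁾`
of the construction, where `F₁ = Ẽ' ⊗ μ_{A''}` (a map of degree `n'`),
`F₃ = μ_{A'} ⊗ Ẽ''` (degree `n''`), `g` is the degree of `G̃`, `σ⁻¹` is realized by the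
canonical inclusion `ι : s⁻¹A → BA`, and all Koszul signs are expressed via `sgnPow`. -/
def Mop (F₁ F₃ : T.A.Bar →ₗ[R] T.A.carrier) (n'' g : ℤ)
    (Gt : T.A.Bar →ₗ[R] T.A.carrier ⊗[R] (T.A.Bar ⊗[R] T.A.carrier)) :
    T.A.Bar →ₗ[R] T.A.carrier ⊗[R] (T.A.Bar ⊗[R] T.A.carrier) :=
  -- `(σ⁻¹ ⊗ 1 ⊗ 1) G̃ : BA → BA ⊗ (BA ⊗ A)`
  let Gt' : T.A.Bar →ₗ[R] T.A.Bar ⊗[R] (T.A.Bar ⊗[R] T.A.carrier) :=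
    TensorProduct.map (TensorAlgebra.ι R) LinearMap.id ∘ₗ Gt
  -- `x₂ ⊗ (y₁ ⊗ (y₂ ⊗ y₃)) ↦ Δ ∇⁽³⁾(x₂ ⊗ y₁ ⊗ y₂) ⊗ y₃`
  let inner : T.A.Bar ⊗[R] (T.A.Bar ⊗[R] (T.A.Bar ⊗[R] T.A.carrier)) →ₗ[R]
      T.A.Bar ⊗[R] (T.A.Bar ⊗[R] T.A.carrier) :=
    (TensorProduct.assoc R T.A.Bar T.A.Bar T.A.carrier).toLinearMap ∘ₗ
    TensorProduct.map BD.Δ LinearMap.id ∘ₗ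
    TensorProduct.map (T.A.concat ∘ₗ TensorProduct.map T.A.concat LinearMap.id)
      LinearMap.id ∘ₗ
    (TensorProduct.assoc R (T.A.Bar ⊗[R] T.A.Bar) T.A.Bar T.A.carrier).symm.toLinearMap ∘ₗ
    (TensorProduct.assoc R T.A.Bar T.A.Bar (T.A.Bar ⊗[R] T.A.carrier)).symm.toLinearMap
  TensorProduct.map (F₁ ∘ₗ BD.sgnPow n'')
      (TensorProduct.map (BD.sgnPow n'')
        (LinearMap.mul' R T.A.carrier ∘ₗ TensorProduct.map F₃ LinearMap.id)) ∘ₗ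
    TensorProduct.map LinearMap.id inner ∘ₗ
    TensorProduct.map (BD.sgnPow (g - 1)) (TensorProduct.map (BD.sgnPow (g - 1)) Gt') ∘ₗ
    TensorProduct.map LinearMap.id BD.Δ ∘ₗ BD.Δ

/-- The augmentation `ε_{B(A,A,A)} : A ⊗ BA ⊗ A → A ⊗_A A = A` of the two-sided bar
construction: it kills bar length `≥ 1` and multiplies the outer factors. -/
def εBAAA : T.A.carrier ⊗[R] (T.A.Bar ⊗[R] T.A.carrier) →ₗ[R] T.A.carrier :=
  LinearMap.mul' R T.A.carrier ∘ₗ TensorProduct.map LinearMap.id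
    ((TensorProduct.lid R T.A.carrier).toLinearMap ∘ₗ TensorProduct.map BD.εB LinearMap.id)

end Construction

/-- The data of the construction of Section 3: the maps `Ẽ' ⊗ μ_{A''}` and
`μ_{A'} ⊗ Ẽ''` (as operators `BA → A` characterized by their values on homogeneous
words of pure tensors, with the Koszul reordering signs), and the maps
`G_a : BA → B(A,A,A) = A ⊗ BA ⊗ A`, linear in `a`, determined by the recursion
`G_{[a₁]} = ((E'_{[a'₁]}⊗μ)⊗1⊗(μ⊗E''_{[a''₁]}))Δ⁽³⁾` and
`G_a = M(E'_{[a'₁]}, E''_{[a''₁]}, G_{[a₂|⋯|a_k]})` for bar length `k > 1`. -/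
structure GData {R : Type} [CommRing R] {A' A'' : DGAlgebra R}
    (BD' : BarData A') (BD'' : BarData A'') (T : TensorDGA A' A'') (BD : BarData T.A)
    (E' : A'.Bar ⊗[R] A'.Bar →ₗ[R] A'.carrier)
    (E'' : A''.Bar ⊗[R] A''.Bar →ₗ[R] A''.carrier) : Type where
  Emu : (A'.Bar →ₗ[R] A'.carrier) → (T.A.Bar →ₗ[R] T.A.carrier)
  Emu_word : ∀ (F : A'.Bar →ₗ[R] A'.carrier) (l' : List A'.carrier)
    (l'' : List A''.carrier) (ds' ds'' : List ℤ), l'.length = l''.length →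
    A'.Homog l' ds' → A''.Homog l'' ds'' →
    Emu F (T.A.word (T.mixList l' l'')) =
      pm (koszulExpL ds' ds'' l'.length) • T.e.symm (F (A'.word l') ⊗ₜ[R] l''.prod)
  muE : (A''.Bar →ₗ[R] A''.carrier) → (T.A.Bar →ₗ[R] T.A.carrier)
  muE_word : ∀ (F : A''.Bar →ₗ[R] A''.carrier) (l' : List A'.carrier)
    (l'' : List A''.carrier) (ds' ds'' : List ℤ), l'.length = l''.length →
    A'.Homog l' ds' → A''.Homog l'' ds'' →
    muE F (T.A.word (T.mixList l' l'')) =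
      pm (koszulExpR ds' ds'' l'.length) • T.e.symm (l'.prod ⊗ₜ[R] F (A''.word l''))
  G : T.A.Bar →ₗ[R] T.A.Bar →ₗ[R] T.A.carrier ⊗[R] (T.A.Bar ⊗[R] T.A.carrier)
  G_nil : G (T.A.word []) = 0
  G_single : ∀ {n' n'' : ℤ} (a' : A'.carrier) (a'' : A''.carrier),
    a' ∈ A'.grading n' → a'' ∈ A''.grading n'' →
    G (T.A.word [T.e.symm (a' ⊗ₜ[R] a'')]) =
      Gone T BD
        (Emu (E' ∘ₗ TensorProduct.mk R A'.Bar A'.Bar (A'.word [a'])))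
        (muE (E'' ∘ₗ TensorProduct.mk R A''.Bar A''.Bar (A''.word [a''])))
        n''
  G_cons : ∀ {n' n'' : ℤ} (a' : A'.carrier) (a'' : A''.carrier)
    (rest : List T.A.carrier) (ds : List ℤ),
    a' ∈ A'.grading n' → a'' ∈ A''.grading n'' → T.A.Homog rest ds → rest ≠ [] →
    G (T.A.word (T.e.symm (a' ⊗ₜ[R] a'') :: rest)) =
      Mop T BD
        (Emu (E' ∘ₗ TensorProduct.mk R A'.Bar A'.Bar (A'.word [a'])))
        (muE (E'' ∘ₗ TensorProduct.mk R A''.Bar A''.Bar (A''.word [a''])))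
        n'' (bdeg ds + 1)
        (G (T.A.word rest))

/-- The twisting cochain `E : BA ⊗ BA → A` of the construction:
`E(𝟙, b) = α(b)` and `E(a, b) = ε_{B(A,A,A)}(G_a(b))` for `a` of bar length `≥ 1`. -/
def Econstr {R : Type} [CommRing R] {A' A'' : DGAlgebra R}
    {BD' : BarData A'} {BD'' : BarData A''} {T : TensorDGA A' A''} {BD : BarData T.A}
    {E' : A'.Bar ⊗[R] A'.Bar →ₗ[R] A'.carrier}
    {E'' : A''.Bar ⊗[R] A''.Bar →ₗ[R] A''.carrier}
    (GD : GData BD' BD'' T BD E' E'') : T.A.Bar ⊗[R] T.A.Bar →ₗ[R] T.A.carrier :=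
  εBAAA T BD ∘ₗ TensorProduct.lift GD.G +
    (TensorProduct.lid R T.A.carrier).toLinearMap ∘ₗ TensorProduct.map BD.εB BD.α


/-! ### Auxiliary lemmas for the proof -/

section Helpers

variable {R : Type} [CommRing R]

namespace DGAlgebra

variable {A : DGAlgebra R}

lemma word_nil : A.word [] = 1 := rfl

lemma word_cons (a : A.carrier) (l : List A.carrier) :
    A.word (a :: l) = TensorAlgebra.ι R a * A.word l := by
  simp [DGAlgebra.word]

lemma word_singleton (a : A.carrier) : A.word [a] = TensorAlgebra.ι R a := by
  simp [DGAlgebra.word]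

lemma word_append (l m : List A.carrier) : A.word (l ++ m) = A.word l * A.word m := by
  simp [DGAlgebra.word]

lemma homog_nil : A.Homog [] [] := by
  refine ⟨rfl, fun i => ?_⟩
  simp only [List.getD]
  simpa using (A.grading 0).zero_mem

lemma homog_cons {a : A.carrier} {n : ℤ} {l : List A.carrier} {ds : List ℤ}
    (ha : a ∈ A.grading n) (h : A.Homog l ds) : A.Homog (a :: l) (n :: ds) := by
  refine ⟨by simp [h.1], fun i => ?_⟩
  cases i with
  | zero => simpa using ha
  | succ i => simpa using h.2 i

lemma homog_cons_elim {a : A.carrier} {l : List A.carrier} {ds : List ℤ}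
    (h : A.Homog (a :: l) ds) :
    ∃ n ds', ds = n :: ds' ∧ a ∈ A.grading n ∧ A.Homog l ds' := by
  rcases ds with _ | ⟨n, ds'⟩
  · exact absurd h.1 (by simp)
  · refine ⟨n, ds', rfl, by simpa using h.2 0, ⟨by simpa using h.1, fun i => ?_⟩⟩
    simpa using h.2 (i + 1)

lemma homog_append {l₁ l₂ : List A.carrier} {ds₁ ds₂ : List ℤ}
    (h₁ : A.Homog l₁ ds₁) (h₂ : A.Homog l₂ ds₂) :
    A.Homog (l₁ ++ l₂) (ds₁ ++ ds₂) := by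
  induction l₁ generalizing ds₁ with
  | nil =>
    have : ds₁ = [] := by
      have := h₁.1; simpa [List.length_eq_zero_iff] using this.symm
    simpa [this] using h₂
  | cons a l ih =>
    obtain ⟨n, ds', rfl, ha, hl⟩ := homog_cons_elim h₁
    simpa using homog_cons ha (ih hl)

lemma homog_take (i : ℕ) {l : List A.carrier} {ds : List ℤ} (h : A.Homog l ds) :
    A.Homog (l.take i) (ds.take i) := by
  induction l generalizing ds i with
  | nil =>
    have : ds = [] := by
      have := h.1; simpa [List.length_eq_zero_iff] using this.symm
    simpa [this] using homog_nil
  | cons a l ih =>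
    obtain ⟨n, ds', rfl, ha, hl⟩ := homog_cons_elim h
    cases i with
    | zero => simpa using homog_nil
    | succ i => simpa using homog_cons ha (ih i hl)

lemma homog_drop (i : ℕ) {l : List A.carrier} {ds : List ℤ} (h : A.Homog l ds) :
    A.Homog (l.drop i) (ds.drop i) := by
  induction l generalizing ds i with
  | nil =>
    have : ds = [] := by
      have := h.1; simpa [List.length_eq_zero_iff] using this.symm
    simpa [this] using homog_nil
  | cons a l ih =>
    obtain ⟨n, ds', rfl, ha, hl⟩ := homog_cons_elim h
    cases i with
    | zero => simpa using homog_cons ha hl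
    | succ i => simpa using ih i hl

lemma prod_homog {l : List A.carrier} {ds : List ℤ} (h : A.Homog l ds) :
    l.prod ∈ A.grading ds.sum := by
  induction l generalizing ds with
  | nil =>
    have : ds = [] := by
      have := h.1; simpa [List.length_eq_zero_iff] using this.symm
    simpa [this] using A.one_mem
  | cons a l ih =>
    obtain ⟨n, ds', rfl, ha, hl⟩ := homog_cons_elim h
    simpa using A.mul_mem ha (ih hl)

end DGAlgebra

/-- generic getD-of-take lemma -/
lemma getD_take' {α : Type*} (d : α) : ∀ (l : List α) (i k : ℕ), k < i →
    (l.take i).getD k d = l.getD k d := by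
  intro l
  induction l with
  | nil => intro i k _; simp
  | cons a l ih =>
    intro i k hk
    cases i with
    | zero => omega
    | succ i =>
      cases k with
      | zero => simp
      | succ k => simpa using ih i k (by omega)

lemma getD_drop' {α : Type*} (d : α) : ∀ (l : List α) (i k : ℕ),
    (l.drop i).getD k d = l.getD (i + k) d := by
  intro l
  induction l with
  | nil => intro i k; simp
  | cons a l ih =>
    intro i k
    cases i with
    | zero => simp
    | succ i =>
      have : i + 1 + k = (i + k) + 1 := by omega
      rw [this]
      simpa using ih i k

end Helpers

section Main

variable {R : Type} [CommRing R] {A' A'' : DGAlgebra R}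

/-- aligned occurrence of `1 ⊗ 1` in a pair of lists -/
def hasOne (l' : List A'.carrier) (l'' : List A''.carrier) : Prop :=
  ∃ k, k < l'.length ∧ k < l''.length ∧ l'.getD k 0 = 1 ∧ l''.getD k 0 = 1

lemma hasOne_mem' {l' : List A'.carrier} {l'' : List A''.carrier}
    (h : hasOne l' l'') : (1 : A'.carrier) ∈ l' := by
  obtain ⟨k, hk, _, h1, _⟩ := h
  rw [← h1, List.getD_eq_getElem _ _ hk]
  exact List.getElem_mem hk

lemma hasOne_mem'' {l' : List A'.carrier} {l'' : List A''.carrier}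
    (h : hasOne l' l'') : (1 : A''.carrier) ∈ l'' := by
  obtain ⟨k, _, hk, _, h1⟩ := h
  rw [← h1, List.getD_eq_getElem _ _ hk]
  exact List.getElem_mem hk

lemma hasOne_split (i : ℕ) {l' : List A'.carrier} {l'' : List A''.carrier}
    (h : hasOne l' l'') :
    hasOne (l'.take i) (l''.take i) ∨ hasOne (l'.drop i) (l''.drop i) := by
  obtain ⟨k, hk', hk'', h1, h2⟩ := h
  by_cases hki : k < i
  · left
    exact ⟨k, by simp [List.length_take]; omega, by simp [List.length_take]; omega,
      by rw [getD_take' _ _ _ _ hki]; exact h1,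
      by rw [getD_take' _ _ _ _ hki]; exact h2⟩
  · right
    refine ⟨k - i, by simp [List.length_drop]; omega, by simp [List.length_drop]; omega, ?_, ?_⟩
    · rw [getD_drop']; rwa [show i + (k - i) = k by omega]
    · rw [getD_drop']; rwa [show i + (k - i) = k by omega]

lemma hasOne_cons_elim {a' : A'.carrier} {a'' : A''.carrier}
    {l' : List A'.carrier} {l'' : List A''.carrier}
    (h : hasOne (a' :: l') (a'' :: l'')) :
    (a' = 1 ∧ a'' = 1) ∨ hasOne l' l'' := by
  obtain ⟨k, hk', hk'', h1, h2⟩ := h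
  cases k with
  | zero => exact Or.inl ⟨by simpa using h1, by simpa using h2⟩
  | succ k =>
    exact Or.inr ⟨k, by simpa using hk', by simpa using hk'', by simpa using h1,
      by simpa using h2⟩

lemma hasOne_singleton {a' : A'.carrier} {a'' : A''.carrier}
    (h : hasOne [a'] [a'']) : a' = 1 ∧ a'' = 1 := by
  obtain ⟨k, hk', _, h1, h2⟩ := h
  have : k = 0 := by simpa using hk'
  subst this
  exact ⟨by simpa using h1, by simpa using h2⟩

variable {T : TensorDGA A' A''}

lemma mixList_nil : T.mixList [] [] = [] := rfl

lemma mixList_cons (a' : A'.carrier) (a'' : A''.carrier)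
    (l' : List A'.carrier) (l'' : List A''.carrier) :
    T.mixList (a' :: l') (a'' :: l'') =
      T.e.symm (a' ⊗ₜ[R] a'') :: T.mixList l' l'' := rfl

lemma mixList_length {l' : List A'.carrier} {l'' : List A''.carrier}
    (h : l'.length = l''.length) : (T.mixList l' l'').length = l'.length := by
  simp [TensorDGA.mixList, h]

lemma mixList_take (i : ℕ) (l' : List A'.carrier) (l'' : List A''.carrier) :
    (T.mixList l' l'').take i = T.mixList (l'.take i) (l''.take i) :=
  List.take_zipWith

lemma mixList_drop (i : ℕ) (l' : List A'.carrier) (l'' : List A''.carrier) :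
    (T.mixList l' l'').drop i = T.mixList (l'.drop i) (l''.drop i) :=
  List.drop_zipWith

lemma mixList_append {l₁' : List A'.carrier} {l₁'' : List A''.carrier}
    (l₂' : List A'.carrier) (l₂'' : List A''.carrier)
    (h : l₁'.length = l₁''.length) :
    T.mixList (l₁' ++ l₂') (l₁'' ++ l₂'') = T.mixList l₁' l₁'' ++ T.mixList l₂' l₂'' :=
  List.zipWith_append h

lemma mixList_eq_nil_iff {l' : List A'.carrier} {l'' : List A''.carrier}
    (h : l'.length = l''.length) : T.mixList l' l'' = [] ↔ l' = [] := by
  rw [← List.length_eq_zero_iff, ← List.length_eq_zero_iff, mixList_length h]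

lemma mixList_homog {l' : List A'.carrier} {l'' : List A''.carrier}
    {ds' ds'' : List ℤ} (h' : A'.Homog l' ds') (h'' : A''.Homog l'' ds'')
    (hlen : l'.length = l''.length) :
    T.A.Homog (T.mixList l' l'') (List.zipWith (· + ·) ds' ds'') := by
  induction l' generalizing l'' ds' ds'' with
  | nil =>
    have h1 : ds' = [] := by have := h'.1; simpa [List.length_eq_zero_iff] using this.symm
    have h2 : l'' = [] := by simpa [List.length_eq_zero_iff] using hlen.symm
    subst h1; subst h2
    simpa [mixList_nil] using DGAlgebra.homog_nil
  | cons a' rest' ih =>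
    rcases l'' with _ | ⟨a'', rest''⟩
    · simp at hlen
    obtain ⟨n', es', rfl, ha', h'⟩ := DGAlgebra.homog_cons_elim h'
    obtain ⟨n'', es'', rfl, ha'', h''⟩ := DGAlgebra.homog_cons_elim h''
    rw [mixList_cons]
    simpa using DGAlgebra.homog_cons (T.grading_compat ha' ha'')
      (ih h' h'' (by simpa using hlen))

/-- homogeneous pure tensors -/
def HP (T : TensorDGA A' A'') : Set T.A.carrier :=
  {x | ∃ (i' i'' : ℤ) (a' : A'.carrier) (a'' : A''.carrier),
    a' ∈ A'.grading i' ∧ a'' ∈ A''.grading i'' ∧ x = T.e.symm (a' ⊗ₜ[R] a'')}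

lemma one_mem_HP : (1 : T.A.carrier) ∈ HP T :=
  ⟨0, 0, 1, 1, A'.one_mem, A''.one_mem, T.one_def.symm⟩

lemma span_HP_eq_top : Submodule.span R (HP T) = ⊤ := by
  rw [eq_top_iff]
  intro a _
  have ha : a = T.e.symm (T.e a) := by simp
  rw [ha]
  generalize (T.e a) = z
  induction z with
  | zero => simp
  | tmul a' a'' =>
    have h' : a' ∈ ⨆ i, A'.grading i := by
      rw [A'.grading_internal.submodule_iSup_eq_top]; trivial
    refine Submodule.iSup_induction (motive := fun y =>
        T.e.symm (y ⊗ₜ[R] a'') ∈ Submodule.span R (HP T)) _ h' ?_ (by simp) ?_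
    · intro i' x hx
      have h'' : a'' ∈ ⨆ i, A''.grading i := by
        rw [A''.grading_internal.submodule_iSup_eq_top]; trivial
      refine Submodule.iSup_induction (motive := fun y =>
          T.e.symm (x ⊗ₜ[R] y) ∈ Submodule.span R (HP T)) _ h'' ?_ (by simp) ?_
      · intro i'' y hy
        exact Submodule.subset_span ⟨i', i'', x, y, hx, hy, rfl⟩
      · intro y z hy hz
        rw [show x ⊗ₜ[R] (y + z) = x ⊗ₜ[R] y + x ⊗ₜ[R] z from TensorProduct.tmul_add _ _ _,
          map_add]
        exact Submodule.add_mem _ hy hz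
    · intro x y hx hy
      rw [show (x + y) ⊗ₜ[R] a'' = x ⊗ₜ[R] a'' + y ⊗ₜ[R] a'' from TensorProduct.add_tmul _ _ _,
        map_add]
      exact Submodule.add_mem _ hx hy
  | add x y hx hy =>
    rw [map_add]
    exact Submodule.add_mem _ hx hy

/-- reduce a statement about arbitrary words to words with entries in `HP` -/
lemma word_induction {M : Type} [AddCommGroup M] [Module R M] (N : Submodule R M) :
    ∀ (l : List T.A.carrier) (f : T.A.Bar →ₗ[R] M),
    (∀ l₂ : List T.A.carrier, l₂.length = l.length → (∀ x ∈ l₂, x ∈ HP T) →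
      f (T.A.word l₂) ∈ N) → f (T.A.word l) ∈ N := by
  intro l
  induction l with
  | nil => intro f h; exact h [] rfl (by simp)
  | cons a l ih =>
    intro f h
    rw [DGAlgebra.word_cons]
    have haspan : a ∈ Submodule.span R (HP T) := by rw [span_HP_eq_top]; trivial
    refine Submodule.span_induction
      (p := fun x _ => f (TensorAlgebra.ι R x * T.A.word l) ∈ N) ?_ ?_ ?_ ?_ haspan
    · intro x hx
      have := ih (f ∘ₗ LinearMap.mulLeft R (TensorAlgebra.ι R x))
        (fun l₂ hlen hHP => by
          have := h (x :: l₂) (by simp [hlen]) (by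
            intro y hy
            rcases List.mem_cons.mp hy with rfl | hy
            · exact hx
            · exact hHP y hy)
          rw [DGAlgebra.word_cons] at this
          simpa using this)
      simpa using this
    · simp
    · intro x y _ _ hx hy
      rw [map_add, add_mul, map_add]
      exact Submodule.add_mem _ hx hy
    · intro c x _ hx
      rw [map_smul, smul_mul_assoc, map_smul]
      exact Submodule.smul_mem _ _ hx

/-- every list of `HP`-elements is a `mixList` of homogeneous lists -/
lemma HP_list_rep : ∀ (l : List T.A.carrier), (∀ x ∈ l, x ∈ HP T) →
    ∃ (l' : List A'.carrier) (l'' : List A''.carrier) (ds' ds'' : List ℤ),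
      A'.Homog l' ds' ∧ A''.Homog l'' ds'' ∧ l'.length = l''.length ∧
      l'.length = l.length ∧ l = T.mixList l' l'' := by
  intro l
  induction l with
  | nil => intro _; exact ⟨[], [], [], [], DGAlgebra.homog_nil, DGAlgebra.homog_nil, rfl, rfl, rfl⟩
  | cons a l ih =>
    intro h
    obtain ⟨i', i'', a', a'', ha', ha'', rfl⟩ := h a (List.mem_cons_self)
    obtain ⟨l', l'', ds', ds'', h', h'', hlen, hlen2, rfl⟩ :=
      ih (fun x hx => h x (List.mem_cons_of_mem _ hx))
    exact ⟨a' :: l', a'' :: l'', i' :: ds', i'' :: ds'',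
      DGAlgebra.homog_cons ha' h', DGAlgebra.homog_cons ha'' h'',
      by simp [hlen], by simp [hlen2], rfl⟩

end Main

section Constr

variable {R : Type} [CommRing R] {A' A'' : DGAlgebra R}
  {BD' : BarData A'} {BD'' : BarData A''} {T : TensorDGA A' A''} {BD : BarData T.A}
  {E' : A'.Bar ⊗[R] A'.Bar →ₗ[R] A'.carrier}
  {E'' : A''.Bar ⊗[R] A''.Bar →ₗ[R] A''.carrier}

lemma sgnPow_word (n : ℤ) {l : List T.A.carrier} {ds : List ℤ} (h : T.A.Homog l ds) :
    ∃ c : R, BD.sgnPow n (T.A.word l) = c • T.A.word l := by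
  unfold BarData.sgnPow
  split
  · exact ⟨1, by simp⟩
  · exact ⟨((pm (bdeg ds) : ℤ) : R), by
      rw [BD.sgnB_word l ds h, Int.cast_smul_eq_zsmul]⟩

lemma Emu_eval (GD : GData BD' BD'' T BD E' E'') (a' : A'.carrier)
    {l' : List A'.carrier} {l'' : List A''.carrier} {ds' ds'' : List ℤ}
    (hlen : l'.length = l''.length) (h' : A'.Homog l' ds') (h'' : A''.Homog l'' ds'') :
    ∃ c : R, GD.Emu (E' ∘ₗ TensorProduct.mk R A'.Bar A'.Bar (A'.word [a']))
        (T.A.word (T.mixList l' l''))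
      = c • T.e.symm (E' (A'.word [a'] ⊗ₜ[R] A'.word l') ⊗ₜ[R] l''.prod) := by
  refine ⟨((pm (koszulExpL ds' ds'' l'.length) : ℤ) : R), ?_⟩
  rw [GD.Emu_word _ l' l'' ds' ds'' hlen h' h'', Int.cast_smul_eq_zsmul]
  rfl

lemma muE_eval (GD : GData BD' BD'' T BD E' E'') (a'' : A''.carrier)
    {l' : List A'.carrier} {l'' : List A''.carrier} {ds' ds'' : List ℤ}
    (hlen : l'.length = l''.length) (h' : A'.Homog l' ds') (h'' : A''.Homog l'' ds'') :
    ∃ c : R, GD.muE (E'' ∘ₗ TensorProduct.mk R A''.Bar A''.Bar (A''.word [a'']))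
        (T.A.word (T.mixList l' l''))
      = c • T.e.symm (l'.prod ⊗ₜ[R] E'' (A''.word [a''] ⊗ₜ[R] A''.word l'')) := by
  refine ⟨((pm (koszulExpR ds' ds'' l'.length) : ℤ) : R), ?_⟩
  rw [GD.muE_word _ l' l'' ds' ds'' hlen h' h'', Int.cast_smul_eq_zsmul]
  rfl

lemma eps_tmul (x : T.A.carrier) (w : T.A.Bar) (d : T.A.carrier) :
    εBAAA T BD (x ⊗ₜ[R] (w ⊗ₜ[R] d)) = BD.εB w • (x * d) := by
  simp [εBAAA, mul_smul_comm]

/-- The set of "good terms" of `B(A,A,A)`, relative to the hypotheses `big`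
(total bar length `> 1`) and `one` (some entry equals `1`). -/
def Sset (T : TensorDGA A' A'') (big one : Prop) :
    Set (T.A.carrier ⊗[R] (T.A.Bar ⊗[R] T.A.carrier)) :=
  {t | ∃ (x' : A'.carrier) (x'' : A''.carrier) (i' i'' : ℤ)
    (v' : List A'.carrier) (v'' : List A''.carrier) (es' es'' : List ℤ) (d : T.A.carrier),
    x' ∈ A'.grading i' ∧ x'' ∈ A''.grading i'' ∧
    A'.Homog v' es' ∧ A''.Homog v'' es'' ∧ v'.length = v''.length ∧
    t = T.e.symm (x' ⊗ₜ[R] x'') ⊗ₜ[R] (T.A.word (T.mixList v' v'') ⊗ₜ[R] d) ∧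
    (big → v' = [] → T.A.aug (T.e.symm (x' ⊗ₜ[R] x'') * d) = 0) ∧
    (one → (x'' = 1 ∨ (1 : A''.carrier) ∈ v'')) ∧
    (one → big → v' = [] → T.e.symm (x' ⊗ₜ[R] x'') * d = 0)}

lemma Sset_aug_eps {big one : Prop} (hbig : big)
    {t : T.A.carrier ⊗[R] (T.A.Bar ⊗[R] T.A.carrier)}
    (ht : t ∈ Submodule.span R (Sset T big one)) :
    T.A.aug (εBAAA T BD t) = 0 := by
  have : Submodule.span R (Sset T big one) ≤
      LinearMap.ker (T.A.aug.toLinearMap ∘ₗ εBAAA T BD) := by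
    rw [Submodule.span_le]
    rintro t ⟨x', x'', i', i'', v', v'', es', es'', d, _, _, hv', _, hlen, rfl, hc2, _, _⟩
    simp only [SetLike.mem_coe, LinearMap.mem_ker, LinearMap.comp_apply, AlgHom.toLinearMap_apply]
    rw [eps_tmul]
    by_cases hv : v' = []
    · have hv2 : v'' = [] := by
        rw [← List.length_eq_zero_iff, ← hlen, List.length_eq_zero_iff]; exact hv
      subst hv; subst hv2
      rw [mixList_nil, DGAlgebra.word_nil, BD.εB_one, one_smul]
      exact hc2 hbig rfl
    · rw [BD.εB_word _ (by rw [Ne, mixList_eq_nil_iff hlen]; exact hv), zero_smul, map_zero]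
  simpa using this ht

lemma Sset_eps {big one : Prop} (hbig : big) (hone : one)
    {t : T.A.carrier ⊗[R] (T.A.Bar ⊗[R] T.A.carrier)}
    (ht : t ∈ Submodule.span R (Sset T big one)) :
    εBAAA T BD t = 0 := by
  have : Submodule.span R (Sset T big one) ≤
      LinearMap.ker (εBAAA T BD) := by
    rw [Submodule.span_le]
    rintro t ⟨x', x'', i', i'', v', v'', es', es'', d, _, _, hv', _, hlen, rfl, _, _, hc4⟩
    simp only [SetLike.mem_coe, LinearMap.mem_ker]
    rw [eps_tmul]
    by_cases hv : v' = []
    · have hv2 : v'' = [] := by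
        rw [← List.length_eq_zero_iff, ← hlen, List.length_eq_zero_iff]; exact hv
      subst hv; subst hv2
      rw [mixList_nil, DGAlgebra.word_nil, BD.εB_one, one_smul]
      exact hc4 hone hbig rfl
    · rw [BD.εB_word _ (by rw [Ne, mixList_eq_nil_iff hlen]; exact hv), zero_smul]
  simpa using this ht

lemma Econstr_word (GD : GData BD' BD'' T BD E' E'') (l m : List T.A.carrier) :
    Econstr GD (T.A.word l ⊗ₜ[R] T.A.word m) =
      εBAAA T BD (GD.G (T.A.word l) (T.A.word m)) +
      BD.εB (T.A.word l) • BD.α (T.A.word m) := by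
  simp [Econstr, TensorProduct.lift.tmul]

end Constr

section Master

variable {R : Type} [CommRing R] {A' A'' : DGAlgebra R}
  {BD' : BarData A'} {BD'' : BarData A''} {T : TensorDGA A' A''} {BD : BarData T.A}
  {E' : A'.Bar ⊗[R] A'.Bar →ₗ[R] A'.carrier}
  {E'' : A''.Bar ⊗[R] A''.Bar →ₗ[R] A''.carrier}

lemma smul_tmul3 {M₁ M₂ M₃ : Type} [AddCommGroup M₁] [AddCommGroup M₂] [AddCommGroup M₃]
    [Module R M₁] [Module R M₂] [Module R M₃] (c₁ c₂ c₃ : R) (x : M₁) (w : M₂) (y : M₃) :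
    (c₁ • x) ⊗ₜ[R] ((c₂ • w) ⊗ₜ[R] (c₃ • y)) =
      (c₁ * c₂ * c₃) • (x ⊗ₜ[R] (w ⊗ₜ[R] y)) := by
  rw [TensorProduct.tmul_smul, TensorProduct.tmul_smul, ← TensorProduct.smul_tmul',
    ← TensorProduct.smul_tmul', smul_smul, TensorProduct.tmul_smul, smul_smul]
  congr 1
  ring

lemma master_base
    (hE' : IsTwistingCochain BD' E') (hN' : IsNormalized E') (hN'' : IsNormalized E'')
    (GD : GData BD' BD'' T BD E' E'')
    {n' n'' : ℤ} {a' : A'.carrier} {a'' : A''.carrier}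
    (hn' : a' ∈ A'.grading n') (hn'' : a'' ∈ A''.grading n'')
    (m' : List A'.carrier) (m'' : List A''.carrier) (es' es'' : List ℤ)
    (hm' : A'.Homog m' es') (hm'' : A''.Homog m'' es'') (hmlen : m'.length = m''.length) :
    GD.G (T.A.word (T.mixList [a'] [a''])) (T.A.word (T.mixList m' m'')) ∈
      Submodule.span R (Sset T (1 < 1 + m'.length) (hasOne [a'] [a''] ∨ hasOne m' m'')) := by
  have hmix : T.mixList [a'] [a''] = [T.e.symm (a' ⊗ₜ[R] a'')] := rfl
  rw [hmix, GD.G_single a' a'' hn' hn'']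
  set mm := T.mixList m' m'' with hmm
  have e1 : Gone T BD
      (GD.Emu (E' ∘ₗ TensorProduct.mk R A'.Bar A'.Bar (A'.word [a'])))
      (GD.muE (E'' ∘ₗ TensorProduct.mk R A''.Bar A''.Bar (A''.word [a''])))
      n'' (T.A.word mm)
      = ∑ i ∈ Finset.range (mm.length + 1), ∑ j ∈ Finset.range ((mm.drop i).length + 1),
        GD.Emu (E' ∘ₗ TensorProduct.mk R A'.Bar A'.Bar (A'.word [a']))
            (BD.sgnPow n'' (T.A.word (mm.take i))) ⊗ₜ[R]
          (BD.sgnPow n'' (T.A.word ((mm.drop i).take j)) ⊗ₜ[R]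
            GD.muE (E'' ∘ₗ TensorProduct.mk R A''.Bar A''.Bar (A''.word [a'']))
              (T.A.word ((mm.drop i).drop j))) := by
    simp only [Gone, LinearMap.comp_apply]
    rw [BD.Δ_word, map_sum, map_sum]
    refine Finset.sum_congr rfl fun i _ => ?_
    rw [TensorProduct.map_tmul, LinearMap.id_coe, id_eq, BD.Δ_word,
      TensorProduct.tmul_sum, map_sum]
    refine Finset.sum_congr rfl fun j _ => ?_
    simp [TensorProduct.map_tmul]
  rw [e1]
  refine Submodule.sum_mem _ fun i _ => Submodule.sum_mem _ fun j _ => ?_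
  -- notation for the three pieces of m
  have r1 : mm.take i = T.mixList (m'.take i) (m''.take i) := by
    rw [hmm]; exact mixList_take i m' m''
  have r2 : (mm.drop i).take j =
      T.mixList ((m'.drop i).take j) ((m''.drop i).take j) := by
    rw [hmm, mixList_drop, mixList_take]
  have r3 : (mm.drop i).drop j =
      T.mixList ((m'.drop i).drop j) ((m''.drop i).drop j) := by
    rw [hmm, mixList_drop, mixList_drop]
  have h1' := DGAlgebra.homog_take i hm'
  have h1'' := DGAlgebra.homog_take i hm''
  have h2' := DGAlgebra.homog_take j (DGAlgebra.homog_drop i hm')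
  have h2'' := DGAlgebra.homog_take j (DGAlgebra.homog_drop i hm'')
  have h3' := DGAlgebra.homog_drop j (DGAlgebra.homog_drop i hm')
  have h3'' := DGAlgebra.homog_drop j (DGAlgebra.homog_drop i hm'')
  have len1 : (m'.take i).length = (m''.take i).length := by
    simp [List.length_take, hmlen]
  have len2 : ((m'.drop i).take j).length = ((m''.drop i).take j).length := by
    simp [List.length_take, List.length_drop, hmlen]
  have len3 : ((m'.drop i).drop j).length = ((m''.drop i).drop j).length := by
    simp [List.length_drop, hmlen]
  rw [r1, r2, r3]
  obtain ⟨c1, hc1⟩ := sgnPow_word (BD := BD) n'' (mixList_homog h1' h1'' len1)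
  obtain ⟨c2, hc2⟩ := Emu_eval GD a' len1 h1' h1''
  obtain ⟨c3, hc3⟩ := sgnPow_word (BD := BD) n'' (mixList_homog h2' h2'' len2)
  obtain ⟨c4, hc4⟩ := muE_eval GD a'' len3 h3' h3''
  rw [hc1, map_smul, hc2, smul_smul, hc3, hc4, smul_tmul3]
  refine Submodule.smul_mem _ _ ?_
  -- now the canonical term
  set X := T.e.symm (E' (A'.word [a'] ⊗ₜ[R] A'.word (m'.take i)) ⊗ₜ[R] (m''.take i).prod)
    with hX
  set Y := T.e.symm (((m'.drop i).drop j).prod ⊗ₜ[R]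
      E'' (A''.word [a''] ⊗ₜ[R] A''.word ((m''.drop i).drop j))) with hY
  -- kill lemmas
  have killX : E' (A'.word [a'] ⊗ₜ[R] A'.word (m'.take i)) = 0 →
      X ⊗ₜ[R] (T.A.word (T.mixList ((m'.drop i).take j) ((m''.drop i).take j)) ⊗ₜ[R] Y) ∈
        Submodule.span R (Sset T (1 < 1 + m'.length) (hasOne [a'] [a''] ∨ hasOne m' m'')) := by
    intro h0
    rw [hX, h0, TensorProduct.zero_tmul, map_zero, TensorProduct.zero_tmul]
    exact Submodule.zero_mem _
  have killY : E'' (A''.word [a''] ⊗ₜ[R] A''.word ((m''.drop i).drop j)) = 0 →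
      X ⊗ₜ[R] (T.A.word (T.mixList ((m'.drop i).take j) ((m''.drop i).take j)) ⊗ₜ[R] Y) ∈
        Submodule.span R (Sset T (1 < 1 + m'.length) (hasOne [a'] [a''] ∨ hasOne m' m'')) := by
    intro h0
    rw [hY, h0, TensorProduct.tmul_zero, map_zero, TensorProduct.tmul_zero,
      TensorProduct.tmul_zero]
    exact Submodule.zero_mem _
  -- generic membership helper
  have push : ((hasOne [a'] [a''] ∨ hasOne m' m'') →
        ((m''.take i).prod = 1 ∨ (1 : A''.carrier) ∈ (m''.drop i).take j)) →
      ((hasOne [a'] [a''] ∨ hasOne m' m'') → (1 < 1 + m'.length) →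
        (m'.drop i).take j = [] → X * Y = 0) →
      ((1 < 1 + m'.length) → (m'.drop i).take j = [] → T.A.aug (X * Y) = 0) →
      X ⊗ₜ[R] (T.A.word (T.mixList ((m'.drop i).take j) ((m''.drop i).take j)) ⊗ₜ[R] Y) ∈
        Submodule.span R (Sset T (1 < 1 + m'.length) (hasOne [a'] [a''] ∨ hasOne m' m'')) := by
    intro hC3 hC4 hC2
    refine Submodule.subset_span ⟨E' (A'.word [a'] ⊗ₜ[R] A'.word (m'.take i)),
      (m''.take i).prod, _, _, (m'.drop i).take j, (m''.drop i).take j,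
      es'.drop i |>.take j, es''.drop i |>.take j, Y,
      hE'.degree [a'] (m'.take i) [n'] (es'.take i)
        (DGAlgebra.homog_cons hn' DGAlgebra.homog_nil) h1',
      DGAlgebra.prod_homog h1'', h2', h2'', len2, rfl, hC2, hC3, hC4⟩
  -- general aug condition (used in every membership path)
  have hC2gen : (1 < 1 + m'.length) → (m'.drop i).take j = [] → T.A.aug (X * Y) = 0 := by
    intro hbig h2nil
    have hm'ne : m' ≠ [] := by
      intro h; rw [h] at hbig; simp at hbig
    rw [map_mul]
    by_cases h1nil : m'.take i = []
    · -- then i = 0 and j = 0, so the last piece is all of m'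
      have hi : i = 0 := by
        rcases List.take_eq_nil_iff.mp h1nil with h | h
        · exact h
        · exact absurd h hm'ne
      subst hi
      rw [List.drop_zero] at h2nil
      have hj : j = 0 := by
        rcases List.take_eq_nil_iff.mp h2nil with h | h
        · exact h
        · exact absurd h hm'ne
      subst hj
      have hm''ne : m'' ≠ [] := by
        intro h
        exact hm'ne (by rw [← List.length_eq_zero_iff, hmlen, h]; simp)
      have : T.A.aug Y = 0 := by
        rw [hY]
        simp only [List.drop_zero]
        rw [T.aug_compat]
        rw [hN''.aug_ideal [a''] m'' (by
          have : 0 < m''.length := List.length_pos_iff.mpr hm''ne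
          simpa using this)]
        ring
      rw [this, mul_zero]
    · have : T.A.aug X = 0 := by
        rw [hX, T.aug_compat]
        rw [hN'.aug_ideal [a'] (m'.take i) (by
          have : 0 < (m'.take i).length := List.length_pos_iff.mpr h1nil
          simpa using this)]
        ring
      rw [this, zero_mul]
  by_cases h1nil : m'.take i = []
  · -- x'' = 1 membership path
    have h1nil'' : m''.take i = [] := by
      rw [← List.length_eq_zero_iff, ← len1, List.length_eq_zero_iff]; exact h1nil
    refine push (fun _ => Or.inl (by rw [h1nil'']; rfl)) ?_ hC2gen
    intro hone hbig h2nil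
    -- as in hC2gen : i = 0, j = 0
    have hm'ne : m' ≠ [] := by intro h; rw [h] at hbig; simp at hbig
    have hi : i = 0 := by
      rcases List.take_eq_nil_iff.mp h1nil with h | h
      · exact h
      · exact absurd h hm'ne
    subst hi
    rw [List.drop_zero] at h2nil
    have hj : j = 0 := by
      rcases List.take_eq_nil_iff.mp h2nil with h | h
      · exact h
      · exact absurd h hm'ne
    subst hj
    have hm''ne : m'' ≠ [] := by
      intro h
      exact hm'ne (by rw [← List.length_eq_zero_iff, hmlen, h]; simp)
    have hlenm'' : 1 < ([a''] : List A''.carrier).length + m''.length := by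
      have : 0 < m''.length := List.length_pos_iff.mpr hm''ne
      simpa using this
    have hY0 : E'' (A''.word [a''] ⊗ₜ[R] A''.word ((m''.drop 0).drop 0)) = 0 := by
      simp only [List.drop_zero]
      rcases hone with h1 | hm
      · obtain ⟨_, ha''1⟩ := hasOne_singleton h1
        exact hN''.vanish [a''] m'' hlenm'' (Or.inl (by rw [ha''1]; exact List.mem_singleton_self 1))
      · exact hN''.vanish [a''] m'' hlenm'' (Or.inr (hasOne_mem'' hm))
    have : Y = 0 := by
      rw [hY, hY0, TensorProduct.tmul_zero, map_zero]
    rw [this, mul_zero]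
  · by_cases hone : (hasOne [a'] [a''] ∨ hasOne m' m'')
    · have hlen1big : 1 < ([a'] : List A'.carrier).length + (m'.take i).length := by
        have : 0 < (m'.take i).length := List.length_pos_iff.mpr h1nil
        simpa using this
      rcases hone with h1 | hm
      · obtain ⟨ha'1, _⟩ := hasOne_singleton h1
        exact killX (hN'.vanish [a'] (m'.take i) hlen1big
          (Or.inl (by rw [ha'1]; exact List.mem_singleton_self 1)))
      · rcases hasOne_split i hm with hm1 | hm23
        · exact killX (hN'.vanish [a'] (m'.take i) hlen1big (Or.inr (hasOne_mem' hm1)))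
        · rcases hasOne_split j hm23 with hm2 | hm3
          · -- the 1-entry lies in the middle
            have hmid : (1 : A''.carrier) ∈ (m''.drop i).take j := hasOne_mem'' hm2
            have hmidne : (m'.drop i).take j ≠ [] := by
              intro h
              have : (m''.drop i).take j = [] := by
                rw [← List.length_eq_zero_iff, ← len2, List.length_eq_zero_iff]; exact h
              rw [this] at hmid; simp at hmid
            refine push (fun _ => Or.inr hmid) (fun _ _ h => absurd h hmidne) hC2gen
          · refine killY (hN''.vanish [a''] ((m''.drop i).drop j) ?_
              (Or.inr (hasOne_mem'' hm3)))
            have : 0 < ((m''.drop i).drop j).length :=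
              List.length_pos_iff.mpr (by
                intro h
                have := hasOne_mem'' hm3
                rw [h] at this; simp at this)
            simpa using this
    · exact push (fun h => absurd h hone) (fun h => absurd h hone) hC2gen

end Master

section MasterStep

variable {R : Type} [CommRing R] {A' A'' : DGAlgebra R}
  {BD' : BarData A'} {BD'' : BarData A''} {T : TensorDGA A' A''} {BD : BarData T.A}
  {E' : A'.Bar ⊗[R] A'.Bar →ₗ[R] A'.carrier}
  {E'' : A''.Bar ⊗[R] A''.Bar →ₗ[R] A''.carrier}

lemma smul_tmul2 {M₁ M₂ M₃ : Type} [AddCommGroup M₁] [AddCommGroup M₂] [AddCommGroup M₃]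
    [Module R M₁] [Module R M₂] [Module R M₃] (c₁ c₂ : R) (x : M₁) (w : M₂) (z : M₃) :
    (c₁ • x) ⊗ₜ[R] ((c₂ • w) ⊗ₜ[R] z) = (c₁ * c₂) • (x ⊗ₜ[R] (w ⊗ₜ[R] z)) := by
  rw [← TensorProduct.smul_tmul', ← TensorProduct.smul_tmul', TensorProduct.tmul_smul,
    smul_smul]

set_option maxHeartbeats 3000000 in
set_option synthInstance.maxHeartbeats 1000000 in
lemma master_step
    (hE' : IsTwistingCochain BD' E') (hN' : IsNormalized E') (hN'' : IsNormalized E'')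
    (GD : GData BD' BD'' T BD E' E'')
    {n' n'' : ℤ} {a' : A'.carrier} {a'' : A''.carrier}
    (hn' : a' ∈ A'.grading n') (hn'' : a'' ∈ A''.grading n'')
    {rest' : List A'.carrier} {rest'' : List A''.carrier} {rds' rds'' : List ℤ}
    (hr' : A'.Homog rest' rds') (hr'' : A''.Homog rest'' rds'')
    (hrlen : rest'.length = rest''.length) (hrne : rest' ≠ [])
    (IH : ∀ (q' : List A'.carrier) (q'' : List A''.carrier) (fs' fs'' : List ℤ),
      A'.Homog q' fs' → A''.Homog q'' fs'' → q'.length = q''.length →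
      GD.G (T.A.word (T.mixList rest' rest'')) (T.A.word (T.mixList q' q'')) ∈
        Submodule.span R (Sset T (1 < rest'.length + q'.length)
          (hasOne rest' rest'' ∨ hasOne q' q'')))
    (m' : List A'.carrier) (m'' : List A''.carrier) (es' es'' : List ℤ)
    (hm' : A'.Homog m' es') (hm'' : A''.Homog m'' es'') (hmlen : m'.length = m''.length) :
    GD.G (T.A.word (T.mixList (a' :: rest') (a'' :: rest'')))
        (T.A.word (T.mixList m' m'')) ∈
      Submodule.span R (Sset T (1 < (a' :: rest').length + m'.length)
        (hasOne (a' :: rest') (a'' :: rest'') ∨ hasOne m' m'')) := by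
  have hmixne : T.mixList rest' rest'' ≠ [] := fun h => hrne ((mixList_eq_nil_iff hrlen).mp h)
  rw [mixList_cons, GD.G_cons a' a'' (T.mixList rest' rest'')
    (List.zipWith (· + ·) rds' rds'') hn' hn'' (mixList_homog hr' hr'' hrlen) hmixne]
  set mm := T.mixList m' m'' with hmm
  simp only [Mop, LinearMap.comp_apply]
  rw [BD.Δ_word, map_sum, map_sum, map_sum, map_sum]
  refine Submodule.sum_mem _ fun i _ => ?_
  rw [TensorProduct.map_tmul]
  simp only [LinearMap.id_coe, id_eq]
  rw [BD.Δ_word, TensorProduct.tmul_sum, map_sum, map_sum, map_sum]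
  refine Submodule.sum_mem _ fun j _ => ?_
  -- list bookkeeping
  have r1 : mm.take i = T.mixList (m'.take i) (m''.take i) := by
    rw [hmm]; exact mixList_take i m' m''
  have r2 : (mm.drop i).take j =
      T.mixList ((m'.drop i).take j) ((m''.drop i).take j) := by
    rw [hmm, mixList_drop, mixList_take]
  have r3 : (mm.drop i).drop j =
      T.mixList ((m'.drop i).drop j) ((m''.drop i).drop j) := by
    rw [hmm, mixList_drop, mixList_drop]
  have h1' := DGAlgebra.homog_take i hm'
  have h1'' := DGAlgebra.homog_take i hm''
  have h2' := DGAlgebra.homog_take j (DGAlgebra.homog_drop i hm')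
  have h2'' := DGAlgebra.homog_take j (DGAlgebra.homog_drop i hm'')
  have h3' := DGAlgebra.homog_drop j (DGAlgebra.homog_drop i hm')
  have h3'' := DGAlgebra.homog_drop j (DGAlgebra.homog_drop i hm'')
  have len1 : (m'.take i).length = (m''.take i).length := by
    simp [List.length_take, hmlen]
  have len2 : ((m'.drop i).take j).length = ((m''.drop i).take j).length := by
    simp [List.length_take, List.length_drop, hmlen]
  have len3 : ((m'.drop i).drop j).length = ((m''.drop i).drop j).length := by
    simp [List.length_drop, hmlen]
  rw [r1, r2, r3]
  -- extract the two sign scalars of `sgnPow (g-1)`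
  obtain ⟨c1, hc1⟩ := sgnPow_word (BD := BD)
    (bdeg (List.zipWith (· + ·) rds' rds'') + 1 - 1) (mixList_homog h1' h1'' len1)
  obtain ⟨c2, hc2⟩ := sgnPow_word (BD := BD)
    (bdeg (List.zipWith (· + ·) rds' rds'') + 1 - 1) (mixList_homog h2' h2'' len2)
  simp only [TensorProduct.map_tmul, LinearMap.comp_apply, LinearMap.id_coe, id_eq,
    hc1, hc2, map_smul, ← TensorProduct.smul_tmul', TensorProduct.tmul_smul, smul_smul]
  refine Submodule.smul_mem _ _ ?_
  -- bring in the inductive hypothesis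
  have hX := IH ((m'.drop i).drop j) ((m''.drop i).drop j)
    ((es'.drop i).drop j) ((es''.drop i).drop j) h3' h3'' len3
  generalize hXd : GD.G (T.A.word (T.mixList rest' rest''))
    (T.A.word (T.mixList ((m'.drop i).drop j) ((m''.drop i).drop j))) = X at hX ⊢
  clear hXd
  induction hX using Submodule.span_induction with
  | zero =>
    simp only [map_zero, TensorProduct.tmul_zero]
    exact Submodule.zero_mem _
  | add x y hx hy ihx ihy =>
    simp only [map_add, TensorProduct.tmul_add]
    exact Submodule.add_mem _ ihx ihy
  | smul c x hx ih =>
    simp only [map_smul, TensorProduct.tmul_smul]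
    exact Submodule.smul_mem _ _ ih
  | mem t ht =>
    obtain ⟨x', x'', ix', ix'', v', v'', fs', fs'', d, hx', hx'', hv', hv'', hvlen,
      rfl, _, hc3c, _⟩ := ht
    -- evaluate the inner composite on the pure term
    simp only [TensorProduct.map_tmul, LinearMap.comp_apply, LinearMap.id_coe, id_eq,
      LinearEquiv.coe_coe, TensorProduct.assoc_symm_tmul, TensorProduct.assoc_tmul,
      DGAlgebra.concat, LinearMap.mul'_apply]
    have hw : T.A.word (T.mixList ((m'.drop i).take j ++ x' :: v')
          ((m''.drop i).take j ++ x'' :: v'')) =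
        T.A.word (T.mixList ((m'.drop i).take j) ((m''.drop i).take j)) *
          TensorAlgebra.ι R (T.e.symm (x' ⊗ₜ[R] x'')) *
          T.A.word (T.mixList v' v'') := by
      rw [mixList_append _ _ len2, mixList_cons, DGAlgebra.word_append,
        DGAlgebra.word_cons, mul_assoc]
    rw [← hw, BD.Δ_word, TensorProduct.sum_tmul, map_sum]
    simp only [TensorProduct.assoc_tmul]
    rw [map_sum, TensorProduct.tmul_sum]
    refine Submodule.sum_mem _ fun k _ => ?_
    simp only [TensorProduct.map_tmul, LinearMap.comp_apply, LinearMap.id_coe, id_eq,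
      LinearMap.mul'_apply]
    -- names for the concatenated lists
    set w' : List A'.carrier := (m'.drop i).take j ++ x' :: v' with hwdef'
    set w'' : List A''.carrier := (m''.drop i).take j ++ x'' :: v'' with hwdef''
    have hw'ne : w' ≠ [] := by rw [hwdef']; simp
    have hw''ne : w'' ≠ [] := by rw [hwdef'']; simp
    have hwhom' : A'.Homog w' ((es'.drop i).take j ++ ix' :: fs') :=
      DGAlgebra.homog_append h2' (DGAlgebra.homog_cons hx' hv')
    have hwhom'' : A''.Homog w'' ((es''.drop i).take j ++ ix'' :: fs'') :=
      DGAlgebra.homog_append h2'' (DGAlgebra.homog_cons hx'' hv'')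
    have hwlen : w'.length = w''.length := by
      rw [hwdef', hwdef'']; simp [len2, hvlen]
    have htk : (T.mixList w' w'').take k = T.mixList (w'.take k) (w''.take k) :=
      mixList_take k w' w''
    have hdk : (T.mixList w' w'').drop k = T.mixList (w'.drop k) (w''.drop k) :=
      mixList_drop k w' w''
    rw [htk, hdk]
    have lentk : (w'.take k).length = (w''.take k).length := by
      simp [List.length_take, hwlen]
    have lendk : (w'.drop k).length = (w''.drop k).length := by
      simp [List.length_drop, hwlen]
    -- extract all scalars
    obtain ⟨d1, hd1⟩ := sgnPow_word (BD := BD) n'' (mixList_homog h1' h1'' len1)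
    obtain ⟨d2, hd2⟩ := Emu_eval GD a' len1 h1' h1''
    obtain ⟨d3, hd3⟩ := sgnPow_word (BD := BD) n''
      (mixList_homog (DGAlgebra.homog_take k hwhom') (DGAlgebra.homog_take k hwhom'') lentk)
    obtain ⟨d4, hd4⟩ := muE_eval GD a'' lendk
      (DGAlgebra.homog_drop k hwhom') (DGAlgebra.homog_drop k hwhom'')
    rw [hd1, map_smul, hd2, smul_smul, hd3, hd4, smul_mul_assoc, smul_tmul3]
    refine Submodule.smul_mem _ _ ?_
    -- kill lemmas and membership helper
    set X := T.e.symm (E' (A'.word [a'] ⊗ₜ[R] A'.word (m'.take i)) ⊗ₜ[R] (m''.take i).prod)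
      with hXdef
    set Y := T.e.symm ((w'.drop k).prod ⊗ₜ[R]
        E'' (A''.word [a''] ⊗ₜ[R] A''.word (w''.drop k))) * d with hYdef
    have killX : E' (A'.word [a'] ⊗ₜ[R] A'.word (m'.take i)) = 0 →
        X ⊗ₜ[R] (T.A.word (T.mixList (w'.take k) (w''.take k)) ⊗ₜ[R] Y) ∈
          Submodule.span R (Sset T (1 < (a' :: rest').length + m'.length)
            (hasOne (a' :: rest') (a'' :: rest'') ∨ hasOne m' m'')) := by
      intro h0
      rw [hXdef, h0, TensorProduct.zero_tmul, map_zero, TensorProduct.zero_tmul]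
      exact Submodule.zero_mem _
    have killY : E'' (A''.word [a''] ⊗ₜ[R] A''.word (w''.drop k)) = 0 →
        X ⊗ₜ[R] (T.A.word (T.mixList (w'.take k) (w''.take k)) ⊗ₜ[R] Y) ∈
          Submodule.span R (Sset T (1 < (a' :: rest').length + m'.length)
            (hasOne (a' :: rest') (a'' :: rest'') ∨ hasOne m' m'')) := by
      intro h0
      rw [hYdef, h0, TensorProduct.tmul_zero, map_zero, zero_mul,
        TensorProduct.tmul_zero, TensorProduct.tmul_zero]
      exact Submodule.zero_mem _
    have push : ((hasOne (a' :: rest') (a'' :: rest'') ∨ hasOne m' m'') →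
          ((m''.take i).prod = 1 ∨ (1 : A''.carrier) ∈ w''.take k)) →
        ((hasOne (a' :: rest') (a'' :: rest'') ∨ hasOne m' m'') →
          (1 < (a' :: rest').length + m'.length) → w'.take k = [] → X * Y = 0) →
        ((1 < (a' :: rest').length + m'.length) → w'.take k = [] →
          T.A.aug (X * Y) = 0) →
        X ⊗ₜ[R] (T.A.word (T.mixList (w'.take k) (w''.take k)) ⊗ₜ[R] Y) ∈
          Submodule.span R (Sset T (1 < (a' :: rest').length + m'.length)
            (hasOne (a' :: rest') (a'' :: rest'') ∨ hasOne m' m'')) := by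
      intro hC3 hC4 hC2
      refine Submodule.subset_span ⟨E' (A'.word [a'] ⊗ₜ[R] A'.word (m'.take i)),
        (m''.take i).prod, _, _, w'.take k, w''.take k,
        ((es'.drop i).take j ++ ix' :: fs').take k,
        ((es''.drop i).take j ++ ix'' :: fs'').take k, Y,
        hE'.degree [a'] (m'.take i) [n'] (es'.take i)
          (DGAlgebra.homog_cons hn' DGAlgebra.homog_nil) h1',
        DGAlgebra.prod_homog h1'',
        DGAlgebra.homog_take k hwhom', DGAlgebra.homog_take k hwhom'', lentk,
        rfl, hC2, hC3, hC4⟩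
    -- the unconditional augmentation condition
    have hC2gen : (1 < (a' :: rest').length + m'.length) → w'.take k = [] →
        T.A.aug (X * Y) = 0 := by
      intro _ hknil
      rcases List.take_eq_nil_iff.mp hknil with hk0 | hwnil
      · subst hk0
        have hw''big : 1 < ([a''] : List A''.carrier).length + w''.length := by
          have : 0 < w''.length := List.length_pos_iff.mpr hw''ne
          simpa using this
        rw [hYdef]
        simp only [List.drop_zero]
        rw [map_mul, map_mul, T.aug_compat, T.aug_compat,
          hN''.aug_ideal [a''] w'' hw''big]
        ring
      · exact absurd hwnil hw'ne
    -- resolve a `1` located in `w''`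
    have resolve : (1 : A''.carrier) ∈ w'' →
        X ⊗ₜ[R] (T.A.word (T.mixList (w'.take k) (w''.take k)) ⊗ₜ[R] Y) ∈
          Submodule.span R (Sset T (1 < (a' :: rest').length + m'.length)
            (hasOne (a' :: rest') (a'' :: rest'') ∨ hasOne m' m'')) := by
      intro h1w
      have hsplit : (1 : A''.carrier) ∈ w''.take k ∨ (1 : A''.carrier) ∈ w''.drop k := by
        rw [← List.take_append_drop k w''] at h1w
        exact List.mem_append.mp h1w
      rcases hsplit with htk1 | hdk1
      · refine push (fun _ => Or.inr htk1) ?_ hC2gen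
        intro _ _ hknil
        exfalso
        rcases List.take_eq_nil_iff.mp hknil with hk0 | hwnil
        · subst hk0; simp at htk1
        · exact hw'ne hwnil
      · refine killY (hN''.vanish [a''] (w''.drop k) ?_ (Or.inr hdk1))
        have : 0 < (w''.drop k).length := List.length_pos_iff.mpr (by
          intro h; rw [h] at hdk1; simp at hdk1)
        simpa using this
    by_cases honeP : (hasOne (a' :: rest') (a'' :: rest'') ∨ hasOne m' m'')
    · rcases honeP with hhead | hm
      · rcases hasOne_cons_elim hhead with ⟨ha'1, ha''1⟩ | hrest1
        · by_cases h1nil : m'.take i = []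
          · have h1nil'' : m''.take i = [] := by
              rw [← List.length_eq_zero_iff, ← len1, List.length_eq_zero_iff]; exact h1nil
            refine push (fun _ => Or.inl (by rw [h1nil'']; rfl)) ?_ hC2gen
            intro _ _ hknil
            rcases List.take_eq_nil_iff.mp hknil with hk0 | hwnil
            · subst hk0
              have hw''big : 1 < ([a''] : List A''.carrier).length + w''.length := by
                have : 0 < w''.length := List.length_pos_iff.mpr hw''ne
                simpa using this
              have hE0 : E'' (A''.word [a''] ⊗ₜ[R] A''.word (w''.drop 0)) = 0 := by
                simp only [List.drop_zero]
                exact hN''.vanish [a''] w'' hw''big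
                  (Or.inl (by rw [ha''1]; exact List.mem_singleton_self 1))
              rw [hYdef, hE0, TensorProduct.tmul_zero, map_zero, zero_mul, mul_zero]
            · exact absurd hwnil hw'ne
          · refine killX (hN'.vanish [a'] (m'.take i) ?_
              (Or.inl (by rw [ha'1]; exact List.mem_singleton_self 1)))
            have : 0 < (m'.take i).length := List.length_pos_iff.mpr h1nil
            simpa using this
        · refine resolve ?_
          rcases hc3c (Or.inl hrest1) with hx1 | hv1
          · rw [hwdef'']
            exact List.mem_append_right _ (by rw [hx1]; exact List.mem_cons_self)
          · rw [hwdef'']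
            exact List.mem_append_right _ (List.mem_cons_of_mem _ hv1)
      · rcases hasOne_split i hm with hm1 | hm23
        · refine killX (hN'.vanish [a'] (m'.take i) ?_ (Or.inr (hasOne_mem' hm1)))
          have : 0 < (m'.take i).length := List.length_pos_iff.mpr (by
            intro h
            have := hasOne_mem' hm1
            rw [h] at this; simp at this)
          simpa using this
        · rcases hasOne_split j hm23 with hm2 | hm3
          · refine resolve ?_
            rw [hwdef'']
            exact List.mem_append_left _ (hasOne_mem'' hm2)
          · refine resolve ?_
            rcases hc3c (Or.inr hm3) with hx1 | hv1
            · rw [hwdef'']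
              exact List.mem_append_right _ (by rw [hx1]; exact List.mem_cons_self)
            · rw [hwdef'']
              exact List.mem_append_right _ (List.mem_cons_of_mem _ hv1)
    · exact push (fun h => absurd h honeP) (fun h => absurd h honeP) hC2gen

end MasterStep

section Cores

variable {R : Type} [CommRing R] {A' A'' : DGAlgebra R}
  {BD' : BarData A'} {BD'' : BarData A''} {T : TensorDGA A' A''} {BD : BarData T.A}
  {E' : A'.Bar ⊗[R] A'.Bar →ₗ[R] A'.carrier}
  {E'' : A''.Bar ⊗[R] A''.Bar →ₗ[R] A''.carrier}

lemma master (hE' : IsTwistingCochain BD' E') (hN' : IsNormalized E')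
    (hN'' : IsNormalized E'') (GD : GData BD' BD'' T BD E' E'') :
    ∀ (l' : List A'.carrier) (l'' : List A''.carrier) (ds' ds'' : List ℤ),
    l' ≠ [] → A'.Homog l' ds' → A''.Homog l'' ds'' → l'.length = l''.length →
    ∀ (m' : List A'.carrier) (m'' : List A''.carrier) (es' es'' : List ℤ),
    A'.Homog m' es' → A''.Homog m'' es'' → m'.length = m''.length →
    GD.G (T.A.word (T.mixList l' l'')) (T.A.word (T.mixList m' m'')) ∈
      Submodule.span R (Sset T (1 < l'.length + m'.length)
        (hasOne l' l'' ∨ hasOne m' m'')) := by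
  intro l'
  induction l' with
  | nil => intro _ _ _ hne; exact absurd rfl hne
  | cons a' rest' ih =>
    intro l'' ds' ds'' _ h' h'' hlen m' m'' es' es'' hm' hm'' hmlen
    rcases l'' with _ | ⟨a'', rest''⟩
    · simp at hlen
    obtain ⟨n', rds', rfl, hn', hr'⟩ := DGAlgebra.homog_cons_elim h'
    obtain ⟨n'', rds'', rfl, hn'', hr''⟩ := DGAlgebra.homog_cons_elim h''
    have hrlen : rest'.length = rest''.length := by simpa using hlen
    by_cases hrne : rest' = []
    · subst hrne
      have : rest'' = [] := by
        rw [← List.length_eq_zero_iff, ← hrlen]; rfl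
      subst this
      exact master_base hE' hN' hN'' GD hn' hn'' m' m'' es' es'' hm' hm'' hmlen
    · exact master_step hE' hN' hN'' GD hn' hn'' hr' hr'' hrlen hrne
        (fun q' q'' fs' fs'' hq' hq'' hqlen =>
          ih rest'' rds' rds'' hrne hr' hr'' hrlen q' q'' fs' fs'' hq' hq'' hqlen)
        m' m'' es' es'' hm' hm'' hmlen

lemma core_aug (hE' : IsTwistingCochain BD' E') (hN' : IsNormalized E')
    (hN'' : IsNormalized E'') (GD : GData BD' BD'' T BD E' E'')
    {l' : List A'.carrier} {l'' : List A''.carrier} {ds' ds'' : List ℤ}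
    {m' : List A'.carrier} {m'' : List A''.carrier} {es' es'' : List ℤ}
    (hne : l' ≠ []) (h' : A'.Homog l' ds') (h'' : A''.Homog l'' ds'')
    (hlen : l'.length = l''.length)
    (hm' : A'.Homog m' es') (hm'' : A''.Homog m'' es'') (hmlen : m'.length = m''.length)
    (hbig : 1 < l'.length + m'.length) :
    T.A.aug (Econstr GD
      (T.A.word (T.mixList l' l'') ⊗ₜ[R] T.A.word (T.mixList m' m''))) = 0 := by
  rw [Econstr_word, BD.εB_word _ (fun h => hne ((mixList_eq_nil_iff hlen).mp h)),
    zero_smul, add_zero]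
  exact Sset_aug_eps hbig
    (master hE' hN' hN'' GD l' l'' ds' ds'' hne h' h'' hlen m' m'' es' es'' hm' hm'' hmlen)

lemma core_vanish (hE' : IsTwistingCochain BD' E') (hN' : IsNormalized E')
    (hN'' : IsNormalized E'') (GD : GData BD' BD'' T BD E' E'')
    {l' : List A'.carrier} {l'' : List A''.carrier} {ds' ds'' : List ℤ}
    {m' : List A'.carrier} {m'' : List A''.carrier} {es' es'' : List ℤ}
    (hne : l' ≠ []) (h' : A'.Homog l' ds') (h'' : A''.Homog l'' ds'')
    (hlen : l'.length = l''.length)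
    (hm' : A'.Homog m' es') (hm'' : A''.Homog m'' es'') (hmlen : m'.length = m''.length)
    (hbig : 1 < l'.length + m'.length) (hone : hasOne l' l'' ∨ hasOne m' m'') :
    Econstr GD (T.A.word (T.mixList l' l'') ⊗ₜ[R] T.A.word (T.mixList m' m'')) = 0 := by
  rw [Econstr_word, BD.εB_word _ (fun h => hne ((mixList_eq_nil_iff hlen).mp h)),
    zero_smul, add_zero]
  exact Sset_eps hbig hone
    (master hE' hN' hN'' GD l' l'' ds' ds'' hne h' h'' hlen m' m'' es' es'' hm' hm'' hmlen)

end Cores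

section Final

variable {R : Type} [CommRing R] {A' A'' : DGAlgebra R}
  {BD' : BarData A'} {BD'' : BarData A''} {T : TensorDGA A' A''} {BD : BarData T.A}
  {E' : A'.Bar ⊗[R] A'.Bar →ₗ[R] A'.carrier}
  {E'' : A''.Bar ⊗[R] A''.Bar →ₗ[R] A''.carrier}

lemma pm_zero : pm 0 = 1 := by simp [pm]

lemma koszulExpL_nil : koszulExpL [] [] 0 = 0 := by simp [koszulExpL]

lemma koszulExpR_nil : koszulExpR [] [] 0 = 0 := by simp [koszulExpR]

lemma sgnPow_word_nil (n : ℤ) : BD.sgnPow n (T.A.word []) = T.A.word [] := by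
  unfold BarData.sgnPow
  split
  · rfl
  · rw [BD.sgnB_word [] [] DGAlgebra.homog_nil]
    simp [bdeg, pm]

lemma Econstr_one_right (hN' : IsNormalized E') (hN'' : IsNormalized E'')
    (GD : GData BD' BD'' T BD E' E'') :
    Econstr GD (T.A.word [(1 : T.A.carrier)] ⊗ₜ[R] (1 : T.A.Bar)) = 1 := by
  rw [show (1 : T.A.Bar) = T.A.word [] from rfl, Econstr_word GD [(1 : T.A.carrier)] [],
    BD.εB_word [(1 : T.A.carrier)] (by simp), zero_smul, add_zero,
    show ([(1 : T.A.carrier)] : List T.A.carrier) =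
      [T.e.symm ((1 : A'.carrier) ⊗ₜ[R] (1 : A''.carrier))] by rw [T.one_def],
    GD.G_single (1 : A'.carrier) (1 : A''.carrier) A'.one_mem A''.one_mem]
  have hΔ : BD.Δ (T.A.word []) = T.A.word [] ⊗ₜ[R] T.A.word [] := by
    rw [BD.Δ_word]; simp
  have hF1 : GD.Emu (E' ∘ₗ TensorProduct.mk R A'.Bar A'.Bar (A'.word [1]))
      (T.A.word []) = 1 := by
    have h := GD.Emu_word (E' ∘ₗ TensorProduct.mk R A'.Bar A'.Bar (A'.word [1]))
      [] [] [] [] rfl DGAlgebra.homog_nil DGAlgebra.homog_nil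
    rw [show T.A.word (T.mixList [] []) = T.A.word [] from rfl] at h
    rw [h]
    simp only [List.length_nil]
    rw [koszulExpL_nil, pm_zero]
    simp only [LinearMap.comp_apply, TensorProduct.mk_apply, List.prod_nil]
    rw [show A'.word [] = (1 : A'.Bar) from rfl, hN'.one_right, T.one_def, one_smul]
  have hF3 : GD.muE (E'' ∘ₗ TensorProduct.mk R A''.Bar A''.Bar (A''.word [1]))
      (T.A.word []) = 1 := by
    have h := GD.muE_word (E'' ∘ₗ TensorProduct.mk R A''.Bar A''.Bar (A''.word [1]))
      [] [] [] [] rfl DGAlgebra.homog_nil DGAlgebra.homog_nil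
    rw [show T.A.word (T.mixList [] []) = T.A.word [] from rfl] at h
    rw [h]
    simp only [List.length_nil]
    rw [koszulExpR_nil, pm_zero]
    simp only [LinearMap.comp_apply, TensorProduct.mk_apply, List.prod_nil]
    rw [show A''.word [] = (1 : A''.Bar) from rfl, hN''.one_right, T.one_def, one_smul]
  simp only [Gone, LinearMap.comp_apply]
  rw [hΔ, TensorProduct.map_tmul]
  simp only [LinearMap.id_coe, id_eq]
  rw [hΔ, TensorProduct.map_tmul, TensorProduct.map_tmul, LinearMap.comp_apply]
  rw [sgnPow_word_nil, hF1, hF3, eps_tmul,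
    show T.A.word [] = (1 : T.A.Bar) from rfl, BD.εB_one, one_smul, mul_one]

lemma Econstr_one_left (hN' : IsNormalized E') (hN'' : IsNormalized E'')
    (GD : GData BD' BD'' T BD E' E'') :
    Econstr GD ((1 : T.A.Bar) ⊗ₜ[R] T.A.word [(1 : T.A.carrier)]) = 1 := by
  rw [show (1 : T.A.Bar) = T.A.word [] from rfl,
    Econstr_word GD [] [(1 : T.A.carrier)], GD.G_nil, LinearMap.zero_apply, map_zero,
    zero_add, show T.A.word [] = (1 : T.A.Bar) from rfl, BD.εB_one, BD.α_single, one_smul]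

lemma aug_transfer (hE' : IsTwistingCochain BD' E') (hN' : IsNormalized E')
    (hN'' : IsNormalized E'') (GD : GData BD' BD'' T BD E' E'')
    (l m : List T.A.carrier) (hne : l ≠ []) (hbig : 1 < l.length + m.length) :
    T.A.aug (Econstr GD (T.A.word l ⊗ₜ[R] T.A.word m)) = 0 := by
  have step2 : ∀ m₂ : List T.A.carrier, m₂.length = m.length → (∀ x ∈ m₂, x ∈ HP T) →
      T.A.aug (Econstr GD (T.A.word l ⊗ₜ[R] T.A.word m₂)) = 0 := by
    intro m₂ hm2len hm2HP
    have step1 : ∀ l₂ : List T.A.carrier, l₂.length = l.length → (∀ x ∈ l₂, x ∈ HP T) →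
        T.A.aug (Econstr GD (T.A.word l₂ ⊗ₜ[R] T.A.word m₂)) = 0 := by
      intro l₂ hl2len hl2HP
      obtain ⟨l', l'', ds', ds'', h', h'', hlen, hlenl, rfl⟩ := HP_list_rep l₂ hl2HP
      obtain ⟨m', m'', es', es'', hm', hm'', hmlen, hlenm, rfl⟩ := HP_list_rep m₂ hm2HP
      refine core_aug hE' hN' hN'' GD ?_ h' h'' hlen hm' hm'' hmlen ?_
      · intro h
        apply hne
        rw [← List.length_eq_zero_iff, ← hl2len, mixList_length hlen, h]
        rfl
      · have h1 : l'.length = l.length := by rw [← hl2len, mixList_length hlen]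
        have h2 : m'.length = m.length := by rw [← hm2len, mixList_length hmlen]
        omega
    have := word_induction (T := T) (⊥ : Submodule R R) l
      (T.A.aug.toLinearMap ∘ₗ Econstr GD ∘ₗ
        (TensorProduct.mk R T.A.Bar T.A.Bar).flip (T.A.word m₂))
      (fun l₂ hl2 hHP => by
        simp only [LinearMap.comp_apply, TensorProduct.mk_apply, LinearMap.flip_apply,
          AlgHom.toLinearMap_apply, Submodule.mem_bot]
        exact step1 l₂ hl2 hHP)
    simpa using this
  have := word_induction (T := T) (⊥ : Submodule R R) m
    (T.A.aug.toLinearMap ∘ₗ Econstr GD ∘ₗ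
      TensorProduct.mk R T.A.Bar T.A.Bar (T.A.word l))
    (fun m₂ hm2 hHP => by
      simp only [LinearMap.comp_apply, TensorProduct.mk_apply,
        AlgHom.toLinearMap_apply, Submodule.mem_bot]
      exact step2 m₂ hm2 hHP)
  simpa using this

lemma hasOne_middle (u' : List A'.carrier) (v' : List A'.carrier)
    (u'' : List A''.carrier) (v'' : List A''.carrier) (hu : u'.length = u''.length) :
    hasOne (u' ++ 1 :: v') (u'' ++ 1 :: v'') := by
  refine ⟨u'.length, by simp, by simp [hu], ?_, ?_⟩
  · rw [List.getD_append_right u' (1 :: v') 0 u'.length le_rfl, Nat.sub_self,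
      List.getD_cons_zero]
  · rw [hu, List.getD_append_right u'' (1 :: v'') 0 u''.length le_rfl, Nat.sub_self,
      List.getD_cons_zero]

/-- core vanish applied to HP lists with a literal `1` in the left word -/
lemma core_vanish_left (hE' : IsTwistingCochain BD' E') (hN' : IsNormalized E')
    (hN'' : IsNormalized E'') (GD : GData BD' BD'' T BD E' E'')
    (u₂ v₂ m₂ : List T.A.carrier)
    (hu : ∀ x ∈ u₂, x ∈ HP T) (hv : ∀ x ∈ v₂, x ∈ HP T) (hm : ∀ x ∈ m₂, x ∈ HP T)
    (hbig : 1 < (u₂.length + 1 + v₂.length) + m₂.length) :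
    Econstr GD (T.A.word (u₂ ++ 1 :: v₂) ⊗ₜ[R] T.A.word m₂) = 0 := by
  obtain ⟨u', u'', us', us'', hu', hu'', hulen, hulen2, rfl⟩ := HP_list_rep u₂ hu
  obtain ⟨v', v'', vs', vs'', hv', hv'', hvlen, hvlen2, rfl⟩ := HP_list_rep v₂ hv
  obtain ⟨m', m'', ms', ms'', hm', hm'', hmlen, hmlen2, rfl⟩ := HP_list_rep m₂ hm
  have hrep : T.mixList u' u'' ++ 1 :: T.mixList v' v'' =
      T.mixList (u' ++ 1 :: v') (u'' ++ 1 :: v'') := by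
    rw [mixList_append _ _ hulen, mixList_cons, T.one_def]
  rw [hrep]
  refine core_vanish hE' hN' hN'' GD (by simp)
    (DGAlgebra.homog_append hu' (DGAlgebra.homog_cons A'.one_mem hv'))
    (DGAlgebra.homog_append hu'' (DGAlgebra.homog_cons A''.one_mem hv''))
    (by simp [hulen, hvlen]) hm' hm'' hmlen ?_ (Or.inl (hasOne_middle u' v' u'' v'' hulen))
  · rw [mixList_length hulen, mixList_length hvlen, mixList_length hmlen] at hbig
    simp only [List.length_append, List.length_cons]
    omega

/-- core vanish applied to HP lists with a literal `1` in the right word -/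
lemma core_vanish_right (hE' : IsTwistingCochain BD' E') (hN' : IsNormalized E')
    (hN'' : IsNormalized E'') (GD : GData BD' BD'' T BD E' E'')
    (l₂ u₂ v₂ : List T.A.carrier)
    (hl : ∀ x ∈ l₂, x ∈ HP T) (hu : ∀ x ∈ u₂, x ∈ HP T) (hv : ∀ x ∈ v₂, x ∈ HP T)
    (hlne : l₂ ≠ [])
    (hbig : 1 < l₂.length + (u₂.length + 1 + v₂.length)) :
    Econstr GD (T.A.word l₂ ⊗ₜ[R] T.A.word (u₂ ++ 1 :: v₂)) = 0 := by
  obtain ⟨l', l'', ls', ls'', hl', hl'', hllen, hllen2, rfl⟩ := HP_list_rep l₂ hl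
  obtain ⟨u', u'', us', us'', hu', hu'', hulen, hulen2, rfl⟩ := HP_list_rep u₂ hu
  obtain ⟨v', v'', vs', vs'', hv', hv'', hvlen, hvlen2, rfl⟩ := HP_list_rep v₂ hv
  have hrep : T.mixList u' u'' ++ 1 :: T.mixList v' v'' =
      T.mixList (u' ++ 1 :: v') (u'' ++ 1 :: v'') := by
    rw [mixList_append _ _ hulen, mixList_cons, T.one_def]
  rw [hrep]
  refine core_vanish hE' hN' hN'' GD
    (fun h => hlne ((mixList_eq_nil_iff hllen).mpr h))
    hl' hl'' hllen
    (DGAlgebra.homog_append hu' (DGAlgebra.homog_cons A'.one_mem hv'))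
    (DGAlgebra.homog_append hu'' (DGAlgebra.homog_cons A''.one_mem hv''))
    (by simp [hulen, hvlen]) ?_ (Or.inr (hasOne_middle u' v' u'' v'' hulen))
  · rw [mixList_length hllen, mixList_length hulen, mixList_length hvlen] at hbig
    simp only [List.length_append, List.length_cons]
    omega

end Final

section TheEnd

variable {R : Type} [CommRing R] {A' A'' : DGAlgebra R}
  {BD' : BarData A'} {BD'' : BarData A''} {T : TensorDGA A' A''} {BD : BarData T.A}
  {E' : A'.Bar ⊗[R] A'.Bar →ₗ[R] A'.carrier}
  {E'' : A''.Bar ⊗[R] A''.Bar →ₗ[R] A''.carrier}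

lemma vanish_transfer_left (hE' : IsTwistingCochain BD' E') (hN' : IsNormalized E')
    (hN'' : IsNormalized E'') (GD : GData BD' BD'' T BD E' E'')
    (u v m : List T.A.carrier)
    (hbig : 1 < (u ++ 1 :: v).length + m.length) :
    Econstr GD (T.A.word (u ++ 1 :: v) ⊗ₜ[R] T.A.word m) = 0 := by
  have hbig' : 1 < (u.length + 1 + v.length) + m.length := by
    simp only [List.length_append, List.length_cons] at hbig; omega
  have step2 : ∀ m₂ : List T.A.carrier, m₂.length = m.length → (∀ x ∈ m₂, x ∈ HP T) →
      Econstr GD (T.A.word (u ++ 1 :: v) ⊗ₜ[R] T.A.word m₂) = 0 := by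
    intro m₂ hm2len hm2HP
    have step1 : ∀ v₂ : List T.A.carrier, v₂.length = v.length → (∀ x ∈ v₂, x ∈ HP T) →
        Econstr GD (T.A.word (u ++ 1 :: v₂) ⊗ₜ[R] T.A.word m₂) = 0 := by
      intro v₂ hv2len hv2HP
      have step0 : ∀ u₂ : List T.A.carrier, u₂.length = u.length → (∀ x ∈ u₂, x ∈ HP T) →
          Econstr GD (T.A.word (u₂ ++ 1 :: v₂) ⊗ₜ[R] T.A.word m₂) = 0 := by
        intro u₂ hu2len hu2HP
        exact core_vanish_left hE' hN' hN'' GD u₂ v₂ m₂ hu2HP hv2HP hm2HP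
          (by rw [hu2len, hv2len, hm2len]; omega)
      have := word_induction (T := T) (⊥ : Submodule R T.A.carrier) u
        (Econstr GD ∘ₗ (TensorProduct.mk R T.A.Bar T.A.Bar).flip (T.A.word m₂) ∘ₗ
          LinearMap.mulRight R (T.A.word ((1 : T.A.carrier) :: v₂)))
        (fun u₂ hl hHP => by
          simp only [LinearMap.comp_apply, LinearMap.mulRight_apply, LinearMap.flip_apply,
            TensorProduct.mk_apply, Submodule.mem_bot, ← DGAlgebra.word_append]
          exact step0 u₂ hl hHP)
      simpa only [LinearMap.comp_apply, LinearMap.mulRight_apply, LinearMap.flip_apply,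
        TensorProduct.mk_apply, Submodule.mem_bot, ← DGAlgebra.word_append] using this
    have := word_induction (T := T) (⊥ : Submodule R T.A.carrier) v
      (Econstr GD ∘ₗ (TensorProduct.mk R T.A.Bar T.A.Bar).flip (T.A.word m₂) ∘ₗ
        LinearMap.mulLeft R (T.A.word (u ++ [(1 : T.A.carrier)])))
      (fun v₂ hl hHP => by
        simp only [LinearMap.comp_apply, LinearMap.mulLeft_apply, LinearMap.flip_apply,
          TensorProduct.mk_apply, Submodule.mem_bot, ← DGAlgebra.word_append]
        rw [show (u ++ [(1 : T.A.carrier)]) ++ v₂ = u ++ 1 :: v₂ by simp]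
        exact step1 v₂ hl hHP)
    simp only [LinearMap.comp_apply, LinearMap.mulLeft_apply, LinearMap.flip_apply,
      TensorProduct.mk_apply, Submodule.mem_bot, ← DGAlgebra.word_append] at this
    rw [show (u ++ [(1 : T.A.carrier)]) ++ v = u ++ 1 :: v by simp] at this
    exact this
  have := word_induction (T := T) (⊥ : Submodule R T.A.carrier) m
    (Econstr GD ∘ₗ TensorProduct.mk R T.A.Bar T.A.Bar (T.A.word (u ++ 1 :: v)))
    (fun m₂ h2 hHP => by
      simp only [LinearMap.comp_apply, TensorProduct.mk_apply, Submodule.mem_bot]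
      exact step2 m₂ h2 hHP)
  simpa using this

lemma vanish_transfer_right (hE' : IsTwistingCochain BD' E') (hN' : IsNormalized E')
    (hN'' : IsNormalized E'') (GD : GData BD' BD'' T BD E' E'')
    (l u v : List T.A.carrier) (hne : l ≠ [])
    (hbig : 1 < l.length + (u ++ 1 :: v).length) :
    Econstr GD (T.A.word l ⊗ₜ[R] T.A.word (u ++ 1 :: v)) = 0 := by
  have hbig' : 1 < l.length + (u.length + 1 + v.length) := by
    simp only [List.length_append, List.length_cons] at hbig; omega
  have step2 : ∀ l₂ : List T.A.carrier, l₂.length = l.length → (∀ x ∈ l₂, x ∈ HP T) →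
      Econstr GD (T.A.word l₂ ⊗ₜ[R] T.A.word (u ++ 1 :: v)) = 0 := by
    intro l₂ hl2len hl2HP
    have hl2ne : l₂ ≠ [] := by
      intro h
      exact hne (List.length_eq_zero_iff.mp (by rw [← hl2len, h]; rfl))
    have step1 : ∀ v₂ : List T.A.carrier, v₂.length = v.length → (∀ x ∈ v₂, x ∈ HP T) →
        Econstr GD (T.A.word l₂ ⊗ₜ[R] T.A.word (u ++ 1 :: v₂)) = 0 := by
      intro v₂ hv2len hv2HP
      have step0 : ∀ u₂ : List T.A.carrier, u₂.length = u.length → (∀ x ∈ u₂, x ∈ HP T) →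
          Econstr GD (T.A.word l₂ ⊗ₜ[R] T.A.word (u₂ ++ 1 :: v₂)) = 0 := by
        intro u₂ hu2len hu2HP
        exact core_vanish_right hE' hN' hN'' GD l₂ u₂ v₂ hl2HP hu2HP hv2HP hl2ne
          (by rw [hl2len, hu2len, hv2len]; omega)
      have := word_induction (T := T) (⊥ : Submodule R T.A.carrier) u
        (Econstr GD ∘ₗ TensorProduct.mk R T.A.Bar T.A.Bar (T.A.word l₂) ∘ₗ
          LinearMap.mulRight R (T.A.word ((1 : T.A.carrier) :: v₂)))
        (fun u₂ hl hHP => by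
          simp only [LinearMap.comp_apply, LinearMap.mulRight_apply,
            TensorProduct.mk_apply, Submodule.mem_bot, ← DGAlgebra.word_append]
          exact step0 u₂ hl hHP)
      simpa only [LinearMap.comp_apply, LinearMap.mulRight_apply,
        TensorProduct.mk_apply, Submodule.mem_bot, ← DGAlgebra.word_append] using this
    have := word_induction (T := T) (⊥ : Submodule R T.A.carrier) v
      (Econstr GD ∘ₗ TensorProduct.mk R T.A.Bar T.A.Bar (T.A.word l₂) ∘ₗ
        LinearMap.mulLeft R (T.A.word (u ++ [(1 : T.A.carrier)])))
      (fun v₂ hl hHP => by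
        simp only [LinearMap.comp_apply, LinearMap.mulLeft_apply,
          TensorProduct.mk_apply, Submodule.mem_bot, ← DGAlgebra.word_append]
        rw [show (u ++ [(1 : T.A.carrier)]) ++ v₂ = u ++ 1 :: v₂ by simp]
        exact step1 v₂ hl hHP)
    simp only [LinearMap.comp_apply, LinearMap.mulLeft_apply,
      TensorProduct.mk_apply, Submodule.mem_bot, ← DGAlgebra.word_append] at this
    rw [show (u ++ [(1 : T.A.carrier)]) ++ v = u ++ 1 :: v by simp] at this
    exact this
  have := word_induction (T := T) (⊥ : Submodule R T.A.carrier) l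
    (Econstr GD ∘ₗ (TensorProduct.mk R T.A.Bar T.A.Bar).flip (T.A.word (u ++ 1 :: v)))
    (fun l₂ h2 hHP => by
      simp only [LinearMap.comp_apply, LinearMap.flip_apply, TensorProduct.mk_apply,
        Submodule.mem_bot]
      exact step2 l₂ h2 hHP)
  simpa using this

end TheEnd

/-- Let `A'`, `A''` be augmented dg algebras with level-3 twisting
cochains `E'`, `E''`, set `A = A' ⊗ A''`, and let `E : BA ⊗ BA → A` be the twisting
cochain `E(a,b) = ε_{B(A,A,A)}(G_a(b))` (with `E(𝟙,-) = α`) of the construction.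
If `E'` and `E''` are normalized, then `E` is normalized: `E([1],𝟙) = E(𝟙,[1]) = 1`;
`E(a,b) = 0` whenever the total bar length is `> 1` and some entry `aᵢ` or `bⱼ` equals
`1 ∈ A`; and `E(a,b)` lies in the augmentation ideal `Ā` whenever the total bar length
is `> 1`. -/
theorem Econstr_isNormalized {R : Type} [CommRing R] {A' A'' : DGAlgebra R}
    (BD' : BarData A') (BD'' : BarData A'') (T : TensorDGA A' A'') (BD : BarData T.A)
    (E' : A'.Bar ⊗[R] A'.Bar →ₗ[R] A'.carrier)
    (E'' : A''.Bar ⊗[R] A''.Bar →ₗ[R] A''.carrier)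
    (hE' : IsTwistingCochain BD' E') (hE'' : IsTwistingCochain BD'' E'')
    (h3' : IsLevel3 E') (h3'' : IsLevel3 E'')
    (hN' : IsNormalized E') (hN'' : IsNormalized E'')
    (GD : GData BD' BD'' T BD E' E'') :
    IsNormalized (Econstr GD) := by
  refine ⟨Econstr_one_right hN' hN'' GD, Econstr_one_left hN' hN'' GD, ?_, ?_⟩
  · -- vanish
    intro l m hbig hmem
    by_cases hl : l = []
    · subst hl
      have hm1 : m.length ≠ 1 := by
        simp only [List.length_nil, zero_add] at hbig; omega
      rw [Econstr_word GD [] m, GD.G_nil, LinearMap.zero_apply, map_zero, zero_add,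
        show T.A.word [] = (1 : T.A.Bar) from rfl, BD.εB_one, one_smul,
        BD.α_word m hm1]
    · rcases hmem with h1l | h1m
      · obtain ⟨u, v, rfl⟩ := List.append_of_mem h1l
        exact vanish_transfer_left hE' hN' hN'' GD u v m hbig
      · obtain ⟨u, v, rfl⟩ := List.append_of_mem h1m
        exact vanish_transfer_right hE' hN' hN'' GD l u v hl hbig
  · -- aug_ideal
    intro l m hbig
    by_cases hl : l = []
    · subst hl
      have hm1 : m.length ≠ 1 := by
        simp only [List.length_nil, zero_add] at hbig; omega
      rw [Econstr_word GD [] m, GD.G_nil, LinearMap.zero_apply, map_zero, zero_add,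
        show T.A.word [] = (1 : T.A.Bar) from rfl, BD.εB_one, one_smul,
        BD.α_word m hm1, map_zero]
    · exact aug_transfer hE' hN' hN'' GD l m hl hbig
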